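/- arXiv:2112.00509 — 10 statements merged into one kernel-verified Lean document; each statement's English description precedes it below -/
import Mathlib

section
/- If τ is an MVD-coloring of a connected graph G and S ⊆ V(G) is such that the induced subgraph G[S] is connected, then the restriction of τ to G[S] is an MVD-coloring of G[S]. -/
open SimpleGraph

variable {V : Type*}

/-- There is an `x`–`y` walk all of whose vertices lie in `S`. -/
def ReachableWithin (G : SimpleGraph V) (S : Set V) (x y : V) : Prop :=
  ∃ p : G.Walk x y, ∀ v ∈ p.support, v ∈ S

/-- The vertex set `S` induces a (nonempty) connected subgraph of `G`. -/
def ConnectedOn (G : SimpleGraph V) (S : Set V) : Prop :=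
  S.Nonempty ∧ ∀ x ∈ S, ∀ y ∈ S, ReachableWithin G S x y

/-- `S` is a vertex cut of `G` separating `x` from `y`. -/
def IsCutBetween (G : SimpleGraph V) (x y : V) (S : Set V) : Prop :=
  x ∉ S ∧ y ∉ S ∧ ∀ p : G.Walk x y, ∃ v ∈ p.support, v ∈ S

/-- All vertices of `S` receive the same color under `τ`. -/
def Monochromatic (τ : V → ℕ) (S : Set V) : Prop :=
  ∀ u ∈ S, ∀ v ∈ S, τ u = τ v

/-- `τ` is an MVD-coloring: every pair of distinct nonadjacent vertices is
separated by a monochromatic vertex cut. -/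
def IsMVDColoring (G : SimpleGraph V) (τ : V → ℕ) : Prop :=
  ∀ x y : V, x ≠ y → ¬ G.Adj x y →
    ∃ S : Set V, IsCutBetween G x y S ∧ Monochromatic τ S

/-- The monochromatic vertex-disconnection number: the maximum number of colors
used by an MVD-coloring. -/
noncomputable def mvd (G : SimpleGraph V) : ℕ :=
  sSup {k | ∃ τ : V → ℕ, IsMVDColoring G τ ∧ (Set.range τ).ncard = k}

/-- An `mvd`-coloring: an MVD-coloring attaining `mvd G` colors. -/
def IsOptimalMVDColoring (G : SimpleGraph V) (τ : V → ℕ) : Prop :=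
  IsMVDColoring G τ ∧ (Set.range τ).ncard = mvd G

/-- The subgraph of `G` induced on `S` has no cut vertex. -/
def NoCutVertexOn (G : SimpleGraph V) (S : Set V) : Prop :=
  ∀ v ∈ S, ∀ x ∈ S \ {v}, ∀ y ∈ S \ {v}, ReachableWithin G (S \ {v}) x y

/-- `B` is a block of `G`: a maximal vertex set inducing a connected subgraph
with no cut vertex. -/
def IsBlock (G : SimpleGraph V) (B : Set V) : Prop :=
  ConnectedOn G B ∧ NoCutVertexOn G B ∧
    ∀ C : Set V, B ⊆ C → ConnectedOn G C → NoCutVertexOn G C → C = B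

/-- `G` is 2-connected. -/
def TwoConnected (G : SimpleGraph V) : Prop :=
  3 ≤ Nat.card V ∧ ∀ v : V, ConnectedOn G {u | u ≠ v}

/-- `G` is minimally 2-connected. -/
def MinimallyTwoConnected (G : SimpleGraph V) : Prop :=
  TwoConnected G ∧ ∀ e ∈ G.edgeSet, ¬ TwoConnected (G.deleteEdges {e})

/-- Restriction of an MVD-coloring to a connected induced subgraph is an MVD-coloring. -/
theorem stmt1 {V : Type*} (G : SimpleGraph V) (hG : G.Connected) (τ : V → ℕ)
    (hτ : IsMVDColoring G τ) (S : Set V) (hS : (G.induce S).Connected) :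
    IsMVDColoring (G.induce S) (fun v => τ v.1) := by
  intro x y hxy hadj
  have hne : x.1 ≠ y.1 := fun h => hxy (Subtype.ext h)
  obtain ⟨C, ⟨hxC, hyC, hcut⟩, hmono⟩ := hτ x.1 y.1 hne (fun h => hadj h)
  refine ⟨{v | v.1 ∈ C}, ⟨hxC, hyC, ?_⟩, fun u hu v hv => hmono u.1 hu v.1 hv⟩
  intro p
  obtain ⟨v, hv, hvC⟩ := hcut (p.map (SimpleGraph.Embedding.induce S).toHom)
  have hv : v ∈ (p.map (SimpleGraph.Embedding.induce S).toHom).support := hv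
  rw [Walk.support_map] at hv
  obtain ⟨u, hu, rfl⟩ := List.mem_map.1 hv
  exact ⟨u, hu, hvC⟩
end

section
/- If G is a cycle of order n ≥ 4, then mvd(G) = ⌊n/2⌋. -/
open SimpleGraph

variable {V : Type*}

private lemma mod2 {n s : ℕ} (hn : 0 < n) (hs : s < 2 * n) :
    (s % n = s ∧ s < n) ∨ (s % n = s - n ∧ n ≤ s) := by
  rcases Nat.lt_or_ge s n with h | h
  · exact Or.inl ⟨Nat.mod_eq_of_lt h, h⟩
  · exact Or.inr ⟨by rw [Nat.mod_eq_sub_mod h, Nat.mod_eq_of_lt (by omega)], h⟩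

lemma cadj {n : ℕ} (hn : 2 ≤ n) {u v : Fin n} :
    (cycleGraph n).Adj u v ↔
      (v.val = u.val + 1 ∨ u.val = v.val + 1 ∨ (u.val = 0 ∧ v.val = n - 1) ∨
        (v.val = 0 ∧ u.val = n - 1)) := by
  have hu := u.isLt
  have hv := v.isLt
  have h1 : (u - v).val = (n - v.val + u.val) % n := by rw [Fin.sub_def]
  have h2 : (v - u).val = (n - u.val + v.val) % n := by rw [Fin.sub_def]
  rw [cycleGraph_adj', h1, h2]
  rcases mod2 (show 0 < n by omega) (show n - v.val + u.val < 2*n by omega) with ⟨e1, b1⟩ | ⟨e1, b1⟩ <;>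
    rcases mod2 (show 0 < n by omega) (show n - u.val + v.val < 2*n by omega) with ⟨e2, b2⟩ | ⟨e2, b2⟩ <;>
      rw [e1, e2] <;> omega

lemma hitWalk {n : ℕ} (hn : 2 ≤ n) (a b : Fin n) {w z : Fin n} (p : (cycleGraph n).Walk w z) :
    a.val < w.val → w.val < b.val → (z.val < a.val ∨ b.val < z.val) →
    ∃ v ∈ p.support, v = a ∨ v = b := by
  induction p with
  | nil => intro h1 h2 h3; exact absurd h3 (by omega)
  | @cons c c' d h q ih =>
    intro h1 h2 h3
    by_cases hW : c' = a ∨ c' = b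
    · exact ⟨c', by rw [Walk.support_cons]; exact List.mem_cons_of_mem _ q.start_mem_support, hW⟩
    · push_neg at hW
      have hadj := (cadj hn).1 h
      have hb' := b.isLt
      have hne1 : c'.val ≠ a.val := fun hh => hW.1 (Fin.ext hh)
      have hne2 : c'.val ≠ b.val := fun hh => hW.2 (Fin.ext hh)
      obtain ⟨v, hv1, hv2⟩ := ih (by omega) (by omega) h3
      exact ⟨v, by rw [Walk.support_cons]; exact List.mem_cons_of_mem _ hv1, hv2⟩

lemma cutSymm {V : Type*} {G : SimpleGraph V} {x y : V} {S : Set V}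
    (h : IsCutBetween G x y S) : IsCutBetween G y x S := by
  refine ⟨h.2.1, h.1, fun p => ?_⟩
  obtain ⟨v, hv1, hv2⟩ := h.2.2 p.reverse
  rw [Walk.support_reverse, List.mem_reverse] at hv1
  exact ⟨v, hv1, hv2⟩

lemma cutPair {n : ℕ} (hn : 2 ≤ n) (a b x y : Fin n)
    (h1 : a.val < x.val) (h2 : x.val < b.val) (h3 : y.val < a.val ∨ b.val < y.val) :
    IsCutBetween (cycleGraph n) x y {a, b} := by
  refine ⟨?_, ?_, fun p => ?_⟩
  · simp only [Set.mem_insert_iff, Set.mem_singleton_iff]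
    rintro (rfl | rfl) <;> omega
  · simp only [Set.mem_insert_iff, Set.mem_singleton_iff]
    rintro (rfl | rfl) <;> omega
  · obtain ⟨v, hv1, hv2⟩ := hitWalk hn a b p h1 h2 h3
    exact ⟨v, hv1, by rcases hv2 with rfl | rfl <;> simp⟩

lemma walkFrom {n : ℕ} (hn : 2 ≤ n) : ∀ (k : ℕ), k < n → ∀ (u z : Fin n),
    z.val = (u.val + k) % n →
    ∃ p : (cycleGraph n).Walk u z, ∀ w ∈ p.support, ∃ i, i ≤ k ∧ w.val = (u.val + i) % n := by
  intro k
  induction k with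
  | zero =>
    intro _ u z hz
    have hz' : z = u := Fin.ext (by rw [hz, Nat.add_zero, Nat.mod_eq_of_lt u.isLt])
    subst hz'
    refine ⟨Walk.nil, ?_⟩
    intro w hw
    rw [Walk.support_nil, List.mem_singleton] at hw
    subst hw
    exact ⟨0, le_rfl, by rw [Nat.add_zero, Nat.mod_eq_of_lt w.isLt]⟩
  | succ k ih =>
    intro hk u z hz
    have hu := u.isLt
    set u' : Fin n := ⟨(u.val + 1) % n, Nat.mod_lt _ (by omega)⟩ with hu'
    have hval : u'.val = (u.val + 1) % n := rfl
    have hadj : (cycleGraph n).Adj u u' := by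
      rw [cadj hn]
      rcases mod2 (show 0 < n by omega) (show u.val + 1 < 2*n by omega) with ⟨e, hb⟩ | ⟨e, hb⟩ <;>
        rw [e] at hval <;> omega
    have hz' : z.val = (u'.val + k) % n := by
      rw [hz, hval, Nat.mod_add_mod]
      exact congrArg (· % n) (by omega)
    obtain ⟨p, hp⟩ := ih (by omega) u' z hz'
    refine ⟨Walk.cons hadj p, ?_⟩
    intro w hw
    rw [Walk.support_cons, List.mem_cons] at hw
    rcases hw with rfl | hw
    · exact ⟨0, by omega, by rw [Nat.add_zero, Nat.mod_eq_of_lt w.isLt]⟩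
    · obtain ⟨i, hi, hw2⟩ := hp w hw
      refine ⟨i + 1, by omega, ?_⟩
      rw [hw2, hval, Nat.mod_add_mod]
      exact congrArg (· % n) (by omega)



/-- The MVD coloring of the cycle: reflection pairs. -/
def mvdTau (n : ℕ) : Fin n → ℕ := fun i => min i.val (n - i.val) % (n / 2)

lemma range_mvdTau {n : ℕ} (hn : 4 ≤ n) : Set.range (mvdTau n) = Set.Iio (n / 2) := by
  ext c
  simp only [Set.mem_range, Set.mem_Iio]
  constructor
  · rintro ⟨i, rfl⟩
    exact Nat.mod_lt _ (by omega)
  · intro hc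
    refine ⟨⟨c, by omega⟩, ?_⟩
    show min c (n - c) % (n / 2) = c
    rw [show min c (n - c) = c by omega, Nat.mod_eq_of_lt hc]

lemma ncard_range_mvdTau {n : ℕ} (hn : 4 ≤ n) : (Set.range (mvdTau n)).ncard = n / 2 := by
  rw [range_mvdTau hn, ← Finset.coe_Iio, Set.ncard_coe_finset, Nat.card_Iio]

lemma coreCut {n : ℕ} (hn : 4 ≤ n) (x y : Fin n) (hlt : x.val < y.val)
    (hnadj : ¬ (cycleGraph n).Adj x y) :
    ∃ S, IsCutBetween (cycleGraph n) x y S ∧ Monochromatic (mvdTau n) S := by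
  have hu := x.isLt
  have hv := y.isLt
  have hna : ¬(y.val = x.val + 1 ∨ x.val = y.val + 1 ∨ (x.val = 0 ∧ y.val = n - 1) ∨
      (y.val = 0 ∧ x.val = n - 1)) := fun hh => hnadj ((cadj (by omega)).2 hh)
  have key : ∃ α β : ℕ, x.val < α ∧ α < y.val ∧ ((y.val < β ∧ β < n) ∨ β < x.val) ∧
      min α (n - α) % (n / 2) = min β (n - β) % (n / 2) := by
    rcases le_or_gt (x.val + y.val + 2) n with hc | hc
    · exact ⟨min (n - y.val - 1) (y.val - 1), n - min (n - y.val - 1) (y.val - 1),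
        by omega, by omega, Or.inl (by omega),
        congrArg (· % (n / 2)) (by omega)⟩
    · rcases le_or_gt (n + 2) (x.val + y.val) with hc2 | hc2
      · exact ⟨y.val - 1, n - y.val + 1, by omega, by omega, Or.inr (by omega),
          congrArg (· % (n / 2)) (by omega)⟩
      · by_cases hmb : x.val < n / 2 ∧ n / 2 < y.val
        · refine ⟨n / 2, 0, hmb.1, hmb.2, Or.inr (by omega), ?_⟩
          rw [show min (n / 2) (n - n / 2) = n / 2 by omega,
            show min 0 (n - 0) = 0 by omega, Nat.mod_self, Nat.zero_mod]
        · push_neg at hmb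
          refine ⟨n / 2 + 1, 0, by omega, by omega, Or.inr (by omega), ?_⟩
          rw [show min (n / 2 + 1) (n - (n / 2 + 1)) = n / 2 by omega,
            show min 0 (n - 0) = 0 by omega, Nat.mod_self, Nat.zero_mod]
  obtain ⟨α, β, ha1, ha2, hb, hcol⟩ := key
  have hβn : β < n := by rcases hb with h | h <;> omega
  set A : Fin n := ⟨α, by omega⟩ with hA
  set B : Fin n := ⟨β, hβn⟩ with hB
  refine ⟨{A, B}, ?_, ?_⟩
  · rcases hb with ⟨hb1, hb2⟩ | hb1
    · exact cutSymm (cutPair (by omega) A B y x ha2 hb1 (Or.inl ha1))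
    · have := cutPair (by omega) B A x y hb1 ha1 (Or.inr ha2)
      rwa [Set.pair_comm] at this
  · intro p hp q hq
    simp only [Set.mem_insert_iff, Set.mem_singleton_iff] at hp hq
    have hAB : mvdTau n A = mvdTau n B := hcol
    rcases hp with rfl | rfl <;> rcases hq with rfl | rfl
    · rfl
    · exact hAB
    · exact hAB.symm
    · rfl

lemma isMVD_mvdTau {n : ℕ} (hn : 4 ≤ n) : IsMVDColoring (cycleGraph n) (mvdTau n) := by
  intro x y hne hnadj
  rcases Nat.lt_trichotomy x.val y.val with h | h | h
  · exact coreCut hn x y h hnadj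
  · exact absurd (Fin.ext h) hne
  · obtain ⟨S, h1, h2⟩ := coreCut hn y x h (fun hh => hnadj hh.symm)
    exact ⟨S, cutSymm h1, h2⟩

lemma upperBound {n : ℕ} (hn : 4 ≤ n) (τ : Fin n → ℕ)
    (hτ : IsMVDColoring (cycleGraph n) τ) : (Set.range τ).ncard ≤ n / 2 := by
  classical
  have mate : ∀ v : Fin n, ∃ w : Fin n, w ≠ v ∧ τ w = τ v := by
    intro v
    have hv := v.isLt
    set y : Fin n := ⟨(v.val + 1) % n, Nat.mod_lt _ (by omega)⟩ with hy
    set x : Fin n := ⟨(y.val + (n - 2)) % n, Nat.mod_lt _ (by omega)⟩ with hx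
    have hyval : y.val = (v.val + 1) % n := rfl
    have hxval : x.val = (y.val + (n - 2)) % n := rfl
    have hyv := y.isLt
    have hxv := x.isLt
    have hy2 : y.val = v.val + 1 ∨ (v.val = n - 1 ∧ y.val = 0) := by
      rcases mod2 (show 0 < n by omega) (show v.val + 1 < 2 * n by omega) with ⟨e, hb⟩ | ⟨e, hb⟩ <;>
        rw [e] at hyval <;> omega
    have hx2 : x.val = y.val + (n - 2) ∨ (x.val + n = y.val + (n - 2)) := by
      rcases mod2 (show 0 < n by omega) (show y.val + (n - 2) < 2 * n by omega) with ⟨e, hb⟩ | ⟨e, hb⟩ <;>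
        rw [e] at hxval <;> omega
    have hxy : x ≠ y := fun hh => by have := congrArg Fin.val hh; omega
    have hnadj : ¬ (cycleGraph n).Adj x y := by
      rw [cadj (by omega)]; omega
    obtain ⟨S, ⟨hxS, hyS, hcut⟩, hmono⟩ := hτ x y hxy hnadj
    have hadj1 : (cycleGraph n).Adj x v := by rw [cadj (by omega)]; omega
    have hadj2 : (cycleGraph n).Adj v y := by rw [cadj (by omega)]; omega
    have hvS : v ∈ S := by
      obtain ⟨s, hs, hsS⟩ := hcut (Walk.cons hadj1 (Walk.cons hadj2 Walk.nil))
      simp only [Walk.support_cons, Walk.support_nil, List.mem_cons,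
        List.mem_singleton, List.not_mem_nil, or_false] at hs
      rcases hs with rfl | rfl | rfl
      · exact absurd hsS hxS
      · exact hsS
      · exact absurd hsS hyS
    obtain ⟨p, hp⟩ := walkFrom (by omega) (n - 2) (by omega) y x hxval
    obtain ⟨s, hs, hsS⟩ := hcut p.reverse
    rw [Walk.support_reverse, List.mem_reverse] at hs
    obtain ⟨i, hi, hsval⟩ := hp s hs
    have hslt := s.isLt
    have hsv : s.val ≠ v.val := by
      rcases mod2 (show 0 < n by omega) (show y.val + i < 2 * n by omega) with ⟨e, hb⟩ | ⟨e, hb⟩ <;>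
        rw [e] at hsval <;> omega
    exact ⟨s, fun hh => hsv (congrArg Fin.val hh), hmono s hsS v hvS⟩
  have hcard2 : ∀ c ∈ Finset.univ.image τ, 2 ≤ (Finset.univ.filter (fun a => τ a = c)).card := by
    intro c hc
    obtain ⟨v, -, rfl⟩ := Finset.mem_image.mp hc
    obtain ⟨w, hw1, hw2⟩ := mate v
    refine Finset.one_lt_card.mpr ⟨v, ?_, w, ?_, fun hh => hw1 hh.symm⟩ <;>
      simp [Finset.mem_filter, hw2]
  have hfib : (Finset.univ : Finset (Fin n)).card =
      ∑ c ∈ Finset.univ.image τ, (Finset.univ.filter (fun a => τ a = c)).card :=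
    Finset.card_eq_sum_card_fiberwise (fun a _ => Finset.mem_image_of_mem τ (Finset.mem_univ a))
  have hsum := Finset.card_nsmul_le_sum (Finset.univ.image τ) _ 2 hcard2
  rw [smul_eq_mul] at hsum
  have huniv : (Finset.univ : Finset (Fin n)).card = n := by simp
  have hrange : Set.range τ = ↑(Finset.univ.image τ) := by
    rw [Finset.coe_image, Finset.coe_univ, Set.image_univ]
  rw [hrange, Set.ncard_coe_finset]
  omega

lemma mvd_color_map {V₁ V₂ : Type*} {G : SimpleGraph V₁} {H : SimpleGraph V₂} (e : G ≃g H)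
    (τ : V₂ → ℕ) (hτ : IsMVDColoring H τ) : IsMVDColoring G (τ ∘ ⇑e) := by
  intro x y hne hnadj
  obtain ⟨S, ⟨h1, h2, h3⟩, hmono⟩ := hτ (e x) (e y)
    (fun hh => hne (e.toEquiv.injective hh)) (by rwa [e.map_adj_iff])
  refine ⟨(⇑e) ⁻¹' S, ⟨h1, h2, ?_⟩, ?_⟩
  · intro p
    obtain ⟨s, hs, hsS⟩ := h3 (p.map e.toEmbedding.toHom)
    rw [Walk.support_map, List.mem_map] at hs
    obtain ⟨w, hw, rfl⟩ := hs
    exact ⟨w, hw, hsS⟩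
  · intro a ha b hb
    exact hmono (e a) ha (e b) hb

lemma mvd_iso {V₁ V₂ : Type*} {G : SimpleGraph V₁} {H : SimpleGraph V₂} (e : G ≃g H) :
    mvd G = mvd H := by
  unfold mvd
  congr 1
  ext k
  constructor
  · rintro ⟨τ, h1, h2⟩
    have hr : Set.range (τ ∘ ⇑e.symm) = Set.range τ := by
      ext c
      constructor
      · rintro ⟨a, rfl⟩
        exact ⟨e.symm a, rfl⟩
      · rintro ⟨b, rfl⟩
        exact ⟨e b, by simp⟩
    exact ⟨τ ∘ ⇑e.symm, mvd_color_map e.symm τ h1, by rw [hr]; exact h2⟩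
  · rintro ⟨τ, h1, h2⟩
    have hr : Set.range (τ ∘ ⇑e) = Set.range τ := by
      ext c
      constructor
      · rintro ⟨a, rfl⟩
        exact ⟨e a, rfl⟩
      · rintro ⟨b, rfl⟩
        exact ⟨e.symm b, by simp⟩
    exact ⟨τ ∘ ⇑e, mvd_color_map e τ h1, by rw [hr]; exact h2⟩


/-- A cycle of order `n ≥ 4` has `mvd = ⌊n/2⌋`. -/
theorem stmt4 {n : ℕ} (hn : 4 ≤ n) {V : Type*} (G : SimpleGraph V)
    (h : Nonempty (G ≃g SimpleGraph.cycleGraph n)) :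
    mvd G = n / 2 := by
  obtain ⟨e⟩ := h
  rw [mvd_iso e]
  have hmem : n / 2 ∈ {k | ∃ τ : Fin n → ℕ,
      IsMVDColoring (SimpleGraph.cycleGraph n) τ ∧ (Set.range τ).ncard = k} :=
    ⟨mvdTau n, isMVD_mvdTau hn, ncard_range_mvdTau hn⟩
  have hub : ∀ k ∈ {k | ∃ τ : Fin n → ℕ,
      IsMVDColoring (SimpleGraph.cycleGraph n) τ ∧ (Set.range τ).ncard = k}, k ≤ n / 2 := by
    rintro k ⟨τ, h1, rfl⟩
    exact upperBound hn τ h1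
  show sSup _ = n / 2
  exact le_antisymm (csSup_le ⟨_, hmem⟩ hub) (le_csSup ⟨n / 2, hub⟩ hmem)
end

section
/- Let G be a 2-connected triangle-free graph of order n having an ear decomposition G_0 ⊂ G_1 ⊂ ... ⊂ G_t = G in which every ear P_i (0 ≤ i < t) has at least one internal vertex. Then mvd(G) ≤ ⌊n/2⌋. -/
open SimpleGraph

variable {V : Type*}

lemma two_neighbors {V : Type*} [Fintype V] {G : SimpleGraph V}
    (h2 : TwoConnected G) (v : V) :
    ∃ u w, G.Adj v u ∧ G.Adj v w ∧ u ≠ w := by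
  classical
  by_contra hcon
  push_neg at hcon
  have hcard : 3 ≤ Fintype.card V := by
    have := h2.1; rwa [Nat.card_eq_fintype_card] at this
  obtain ⟨a, ha, b, hb, hab⟩ := Finset.one_lt_card.mp
    (show 1 < (Finset.univ.erase v).card by
      rw [Finset.card_erase_of_mem (Finset.mem_univ v), Finset.card_univ]; omega)
  have ha' : a ≠ v := Finset.ne_of_mem_erase ha
  have hb' : b ≠ v := Finset.ne_of_mem_erase hb
  by_cases hn : ∃ u, G.Adj v u
  · obtain ⟨u, hu⟩ := hn
    have hy : ∃ y, y ≠ v ∧ y ≠ u := by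
      by_cases hau : a = u
      · exact ⟨b, hb', by rw [← hau]; exact hab.symm⟩
      · exact ⟨a, ha', hau⟩
    obtain ⟨y, hyv, hyu⟩ := hy
    obtain ⟨p, hp⟩ := (h2.2 u).2 v (G.ne_of_adj hu) y hyu
    have hnil : ¬ p.Nil := SimpleGraph.Walk.not_nil_of_ne (fun h => hyv h.symm)
    have hadj : G.Adj v (p.getVert 1) := SimpleGraph.Walk.adj_snd hnil
    have hmem : (p.getVert 1) ∈ ({u' | u' ≠ u} : Set V) := hp _ (SimpleGraph.Walk.mem_support_iff_exists_getVert.mpr ⟨1, rfl, by have := SimpleGraph.Walk.not_nil_iff_lt_length.mp hnil; omega⟩)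
    exact hmem (hcon (p.getVert 1) u hadj hu)
  · push_neg at hn
    obtain ⟨p, hp⟩ := (h2.2 a).2 v ha'.symm b hab.symm
    have hnil : ¬ p.Nil := SimpleGraph.Walk.not_nil_of_ne (fun h => hb' h.symm)
    exact hn (p.getVert 1) (SimpleGraph.Walk.adj_snd hnil)

lemma cut_second {V : Type*} {G : SimpleGraph V} {x y v : V} {S : Set V}
    (h2 : TwoConnected G) (hc : IsCutBetween G x y S) (hv : v ∈ S) :
    ∃ w ∈ S, w ≠ v := by
  have hx : x ≠ v := fun h => hc.1 (h ▸ hv)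
  have hy : y ≠ v := fun h => hc.2.1 (h ▸ hv)
  obtain ⟨p, hp⟩ := (h2.2 v).2 x hx y hy
  obtain ⟨z, hz, hzS⟩ := hc.2.2 p
  exact ⟨z, hzS, hp z hz⟩

/-- A 2-connected triangle-free graph with an ear decomposition whose every ear
has an internal vertex satisfies `mvd(G) ≤ ⌊n/2⌋`. -/
theorem stmt6 {V : Type*} [Fintype V] (G : SimpleGraph V)
    (h2 : TwoConnected G) (htf : G.CliqueFree 3)
    (t : ℕ) (H : Fin (t + 1) → G.Subgraph)
    (h0 : ∃ (v : V) (c : G.Walk v v), c.IsCycle ∧ H 0 = c.toSubgraph)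
    (hear : ∀ i : Fin t, ∃ (u v : V) (p : G.Walk u v), p.IsPath ∧ 2 ≤ p.length ∧
      u ∈ (H i.castSucc).verts ∧ v ∈ (H i.castSucc).verts ∧
      (∀ w ∈ p.support, w = u ∨ w = v ∨ w ∉ (H i.castSucc).verts) ∧
      H i.succ = H i.castSucc ⊔ p.toSubgraph)
    (hlast : H (Fin.last t) = ⊤) :
    mvd G ≤ Fintype.card V / 2 := by
  classical
  refine csSup_le' ?_
  rintro k ⟨τ, hτ, rfl⟩
  set C := Finset.univ.image τ with hC
  have hrange : (Set.range τ).ncard = C.card := by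
    rw [← Set.ncard_coe_finset]
    congr 1
    ext c
    simp [hC, eq_comm]
  have hfib : ∀ c ∈ C, 2 ≤ (Finset.univ.filter (fun x => τ x = c)).card := by
    intro c hcC
    obtain ⟨v, -, hv⟩ := Finset.mem_image.mp hcC
    obtain ⟨u, w, hu, hw, huw⟩ := two_neighbors h2 v
    have hnadj : ¬ G.Adj u w := fun hadj =>
      htf {v, u, w} (SimpleGraph.is3Clique_triple_iff.mpr ⟨hu, hw, hadj⟩)
    obtain ⟨S, hcut, hmono⟩ := hτ u w huw hnadj
    have hvS : v ∈ S := by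
      obtain ⟨z, hz, hzS⟩ := hcut.2.2 (SimpleGraph.Walk.cons hu.symm
        (SimpleGraph.Walk.cons hw SimpleGraph.Walk.nil))
      simp [SimpleGraph.Walk.support_cons, SimpleGraph.Walk.support_nil] at hz
      rcases hz with rfl | rfl | rfl
      · exact absurd hzS hcut.1
      · exact hzS
      · exact absurd hzS hcut.2.1
    obtain ⟨w', hw'S, hw'v⟩ := cut_second h2 hcut hvS
    have hw'c : τ w' = c := by rw [hmono w' hw'S v hvS, hv]
    refine Finset.one_lt_card.mpr ⟨v, ?_, w', ?_, hw'v.symm⟩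
    · simp [hv]
    · simp [hw'c]
  have hsum : (Finset.univ : Finset V).card
      = ∑ c ∈ C, (Finset.univ.filter (fun x => τ x = c)).card :=
    Finset.card_eq_sum_card_fiberwise
      (fun x _ => Finset.mem_image_of_mem τ (Finset.mem_univ x))
  have htwo : 2 * C.card ≤ Fintype.card V := by
    calc 2 * C.card = ∑ _c ∈ C, 2 := by rw [Finset.sum_const]; ring
      _ ≤ ∑ c ∈ C, (Finset.univ.filter (fun x => τ x = c)).card :=
          Finset.sum_le_sum hfib
      _ = Fintype.card V := by rw [← hsum, Finset.card_univ]
  rw [hrange]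
  omega
end

section
/- If G is a minimally 2-connected graph of order n ≥ 4, then mvd(G) ≤ ⌊n/2⌋, with equality when G is a cycle. -/
open SimpleGraph

variable {V : Type*}

section AuxMVD

open SimpleGraph

variable {G G' : SimpleGraph V} {S T T' : Set V} {x y z a b c w : V}

lemma rw_refl (h : x ∈ S) : ReachableWithin G S x x :=
  ⟨Walk.nil, by
    intro u hu
    simp only [Walk.support_nil, List.mem_singleton] at hu
    subst hu; exact h⟩

lemma rw_symm (h : ReachableWithin G S x y) : ReachableWithin G S y x := by
  obtain ⟨p, hp⟩ := h
  exact ⟨p.reverse, fun u hu => hp u (by rwa [Walk.support_reverse, List.mem_reverse] at hu)⟩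

lemma rw_trans (h1 : ReachableWithin G S x y) (h2 : ReachableWithin G S y z) :
    ReachableWithin G S x z := by
  obtain ⟨p, hp⟩ := h1
  obtain ⟨q, hq⟩ := h2
  refine ⟨p.append q, fun u hu => ?_⟩
  rw [Walk.mem_support_append_iff] at hu
  exact hu.elim (hp u) (hq u)

lemma rw_cons (h : G.Adj x y) (hx : x ∈ S) (hr : ReachableWithin G S y z) :
    ReachableWithin G S x z := by
  obtain ⟨p, hp⟩ := hr
  refine ⟨Walk.cons h p, fun u hu => ?_⟩
  rw [Walk.support_cons, List.mem_cons] at hu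
  rcases hu with rfl | hu
  · exact hx
  · exact hp u hu

lemma rw_mono_aux (hsub : T ⊆ T')
    (hadj : ∀ u w, G.Adj u w → u ∈ T → w ∈ T → G'.Adj u w) :
    ∀ {a b : V} (p : G.Walk a b), (∀ v ∈ p.support, v ∈ T) → ReachableWithin G' T' a b := by
  intro a b p
  induction p with
  | nil => intro hp; exact rw_refl (hsub (hp _ (by simp)))
  | @cons u c b h q ih =>
    intro hp
    have hu : u ∈ T := hp u (by simp)
    have hc : c ∈ T := hp c (by
      rw [Walk.support_cons]; exact List.mem_cons_of_mem _ q.start_mem_support)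
    exact rw_cons (hadj u c h hu hc) (hsub hu)
      (ih fun v hv => hp v (by rw [Walk.support_cons]; exact List.mem_cons_of_mem _ hv))

lemma rw_mono (hsub : T ⊆ T')
    (hadj : ∀ u w, G.Adj u w → u ∈ T → w ∈ T → G'.Adj u w)
    (h : ReachableWithin G T a b) : ReachableWithin G' T' a b := by
  obtain ⟨p, hp⟩ := h
  exact rw_mono_aux hsub hadj p hp

lemma walk_iff {P : V → Prop}
    (hadj : ∀ u w, G.Adj u w → u ∉ S → w ∉ S → (P u ↔ P w)) :
    ∀ {a b : V} (p : G.Walk a b), (∀ v ∈ p.support, v ∉ S) → (P a ↔ P b) := by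
  intro a b p
  induction p with
  | nil => intro _; rfl
  | @cons u c b h q ih =>
    intro hp
    have h1 : P u ↔ P c := hadj u c h (hp u (by simp))
      (hp c (by rw [Walk.support_cons]; exact List.mem_cons_of_mem _ q.start_mem_support))
    exact h1.trans (ih fun v hv => hp v
      (by rw [Walk.support_cons]; exact List.mem_cons_of_mem _ hv))

lemma mk_del_adj {e : Sym2 V} (h : G.Adj a b) (hne : s(a, b) ≠ e) :
    (G.deleteEdges {e}).Adj a b := by
  rw [SimpleGraph.deleteEdges_adj]
  exact ⟨h, by simpa using hne⟩

lemma del_adj_of {e : Sym2 V} (h : (G.deleteEdges {e}).Adj a b) : G.Adj a b ∧ s(a, b) ≠ e := by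
  rw [SimpleGraph.deleteEdges_adj] at h
  exact ⟨h.1, by simpa using h.2⟩

lemma rw_reroute_aux
    (hxy : ReachableWithin (G.deleteEdges {s(x, y)}) T x y) :
    ∀ {a b : V} (p : G.Walk a b), (∀ v ∈ p.support, v ∈ T) →
      ReachableWithin (G.deleteEdges {s(x, y)}) T a b := by
  intro a b p
  induction p with
  | nil => intro hp; exact rw_refl (hp _ (by simp))
  | @cons u c b h q ih =>
    intro hp
    have hu : u ∈ T := hp u (by simp)
    have hrest := ih (fun v hv => hp v
      (by rw [Walk.support_cons]; exact List.mem_cons_of_mem _ hv))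
    by_cases he : s(u, c) = s(x, y)
    · rw [Sym2.eq_iff] at he
      rcases he with ⟨rfl, rfl⟩ | ⟨rfl, rfl⟩
      · exact rw_trans hxy hrest
      · exact rw_trans (rw_symm hxy) hrest
    · exact rw_cons (mk_del_adj h he) hu hrest

lemma rw_extract_aux :
    ∀ {a b : V} (p : G'.Walk a b), b ≠ x → (∀ v ∈ p.support, v ∈ T) →
      ReachableWithin G' (T \ {x}) a b ∨ ReachableWithin G' T x b := by
  intro a b p
  induction p with
  | nil => intro hbx hp; exact Or.inl (rw_refl ⟨hp _ (by simp), hbx⟩)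
  | @cons u c b h q ih =>
    intro hbx hp
    by_cases hux : u = x
    · subst hux; exact Or.inr ⟨Walk.cons h q, hp⟩
    · rcases ih hbx (fun v hv => hp v
        (by rw [Walk.support_cons]; exact List.mem_cons_of_mem _ hv)) with h1 | h1
      · exact Or.inl (rw_cons h ⟨hp u (by simp), hux⟩ h1)
      · exact Or.inr h1

lemma rw_extract (hbx : b ≠ x) (h : ReachableWithin G' T a b) :
    ReachableWithin G' (T \ {x}) a b ∨ ReachableWithin G' T x b := by
  obtain ⟨p, hp⟩ := h
  exact rw_extract_aux p hbx hp

lemma first_step (h : ReachableWithin G T a b) (hne : a ≠ b) : ∃ c, G.Adj a c ∧ c ∈ T := by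
  obtain ⟨p, hp⟩ := h
  cases p with
  | nil => exact absurd rfl hne
  | cons h q =>
    exact ⟨_, h, hp _ (by rw [Walk.support_cons]; exact List.mem_cons_of_mem _ q.start_mem_support)⟩

lemma tc_reach (h2 : TwoConnected G) {v : V} (ha : a ≠ v) (hb : b ≠ v) :
    ReachableWithin G {u | u ≠ v} a b :=
  (h2.2 v).2 a ha b hb

lemma cutvertex_of_not_tc (hcard : 3 ≤ Nat.card V) (h : ¬ TwoConnected G') :
    ∃ v a b, a ≠ v ∧ b ≠ v ∧ ¬ ReachableWithin G' {u | u ≠ v} a b := by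
  haveI : Finite V := Nat.finite_of_card_ne_zero (by omega)
  haveI : Nontrivial V := Finite.one_lt_card_iff_nontrivial.mp (by omega)
  rw [TwoConnected] at h
  push_neg at h
  obtain ⟨v, hv⟩ := h hcard
  rw [ConnectedOn] at hv
  push_neg at hv
  obtain ⟨w, hw⟩ := exists_ne v
  obtain ⟨aa, ha, bb, hb, hr⟩ := hv ⟨w, hw⟩
  exact ⟨v, aa, bb, ha, hb, hr⟩

lemma exists_ne3 [Fintype V] (hn : 4 ≤ Fintype.card V) (x y z : V) :
    ∃ u, u ≠ x ∧ u ≠ y ∧ u ≠ z := by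
  classical
  by_contra h
  push_neg at h
  have hsub : (Finset.univ : Finset V) ⊆ {x, y, z} := by
    intro u _
    simp only [Finset.mem_insert, Finset.mem_singleton]
    by_contra hu
    push_neg at hu
    exact hu.2.2 (h u hu.1 hu.2.1)
  have h1 := Finset.card_le_card hsub
  have h3 : ({x, y, z} : Finset V).card ≤ 3 := by
    apply le_trans (Finset.card_insert_le _ _)
    have := Finset.card_insert_le y ({z} : Finset V)
    simp only [Finset.card_singleton] at this
    omega
  rw [Finset.card_univ] at h1
  omega

lemma reach_or (h2 : TwoConnected G) (hxy : G.Adj x y) (hxz : G.Adj x z) :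
    ∀ u, u ≠ z → ReachableWithin (G.deleteEdges {s(x, y)}) {t | t ≠ z} u x ∨
      ReachableWithin (G.deleteEdges {s(x, y)}) {t | t ≠ z} u y := by
  have key : ∀ {u t : V} (p : G.Walk u t), (∀ v ∈ p.support, v ∈ {s' | s' ≠ z}) → t = x →
      (ReachableWithin (G.deleteEdges {s(x, y)}) {t | t ≠ z} u x ∨
       ReachableWithin (G.deleteEdges {s(x, y)}) {t | t ≠ z} u y) := by
    intro u t p
    induction p with
    | nil =>
      intro hp ht
      subst ht
      exact Or.inl (rw_refl (hp _ (by simp)))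
    | @cons u c d h q ih =>
      intro hp ht
      have hu : u ∈ {s' | s' ≠ z} := hp u (by simp)
      by_cases he : s(u, c) = s(x, y)
      · rw [Sym2.eq_iff] at he
        rcases he with ⟨rfl, -⟩ | ⟨rfl, -⟩
        · exact Or.inl (rw_refl hu)
        · exact Or.inr (rw_refl hu)
      · have hq' := ih (fun v hv => hp v
          (by rw [Walk.support_cons]; exact List.mem_cons_of_mem _ hv)) ht
        rcases hq' with h1 | h1
        · exact Or.inl (rw_cons (mk_del_adj h he) hu h1)
        · exact Or.inr (rw_cons (mk_del_adj h he) hu h1)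
  intro u hu
  obtain ⟨p, hp⟩ := tc_reach h2 hu hxz.ne
  exact key p hp rfl

lemma tri_notreach (h2 : TwoConnected G)
    (hdel : ¬ TwoConnected (G.deleteEdges {s(x, y)}))
    (hxy : G.Adj x y) (hxz : G.Adj x z) (hyz : G.Adj y z) :
    ¬ ReachableWithin (G.deleteEdges {s(x, y)}) {t | t ≠ z} x y := by
  obtain ⟨v, a, b, ha, hb, hnr⟩ := cutvertex_of_not_tc h2.1 hdel
  have hvz : v = z := by
    by_contra hvz
    apply hnr
    have hG := tc_reach h2 ha hb
    by_cases hvxy : v = x ∨ v = y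
    · refine rw_mono (subset_refl _) (fun u w hadj hu hw => ?_) hG
      refine mk_del_adj hadj (fun hmem => ?_)
      rw [Sym2.eq_iff] at hmem
      rcases hvxy with rfl | rfl <;> rcases hmem with ⟨h1, h2'⟩ | ⟨h1, h2'⟩ <;>
        first | exact hu h1 | exact hw h2'
    · push_neg at hvxy
      obtain ⟨hvx, hvy⟩ := hvxy
      have hxzadj : (G.deleteEdges {s(x, y)}).Adj x z := by
        refine mk_del_adj hxz (fun hmem => ?_)
        rw [Sym2.eq_iff] at hmem
        rcases hmem with ⟨-, h1⟩ | ⟨h1, -⟩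
        · exact hyz.ne' h1
        · exact hxy.ne h1
      have hzyadj : (G.deleteEdges {s(x, y)}).Adj z y := by
        refine mk_del_adj hyz.symm (fun hmem => ?_)
        rw [Sym2.eq_iff] at hmem
        rcases hmem with ⟨h1, -⟩ | ⟨h1, -⟩
        · exact hxz.ne' h1
        · exact hyz.ne' h1
      have hxy' : ReachableWithin (G.deleteEdges {s(x, y)}) {u | u ≠ v} x y :=
        rw_cons hxzadj (Ne.symm hvx)
          (rw_cons hzyadj (Ne.symm hvz) (rw_refl (Ne.symm hvy)))
      obtain ⟨p, hp⟩ := hG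
      exact rw_reroute_aux hxy' p hp
  subst hvz
  intro hreach
  apply hnr
  have key := reach_or h2 hxy hxz
  rcases key a ha with h1 | h1 <;> rcases key b hb with h2' | h2'
  · exact rw_trans h1 (rw_symm h2')
  · exact rw_trans h1 (rw_trans hreach (rw_symm h2'))
  · exact rw_trans h1 (rw_trans (rw_symm hreach) (rw_symm h2'))
  · exact rw_trans h1 (rw_symm h2')

lemma tri_nbhd [Fintype V] (hmin : MinimallyTwoConnected G)
    (hxy : G.Adj x y) (hxz : G.Adj x z) (hyz : G.Adj y z) :
    ∀ w, G.Adj z w → w = x ∨ w = y := by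
  intro w hzw
  by_contra hw
  push_neg at hw
  obtain ⟨hwx, hwy⟩ := hw
  have h2 := hmin.1
  have hnxy := tri_notreach h2 (hmin.2 _ (G.mem_edgeSet.mpr hxy)) hxy hxz hyz
  have hnyz : ¬ ReachableWithin (G.deleteEdges {s(y, z)}) {t | t ≠ x} y z :=
    tri_notreach h2 (hmin.2 _ (G.mem_edgeSet.mpr hyz)) hyz hxy.symm hxz.symm
  have hnxz : ¬ ReachableWithin (G.deleteEdges {s(x, z)}) {t | t ≠ y} x z :=
    tri_notreach h2 (hmin.2 _ (G.mem_edgeSet.mpr hxz)) hxz hxy hyz.symm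
  rcases reach_or h2 hxy hxz w hzw.ne' with h1 | h1
  · rcases rw_extract (x := y) hxy.ne h1 with hc | hc
    · have hmove : ReachableWithin (G.deleteEdges {s(x, z)}) {t | t ≠ y} w x := by
        refine rw_mono (fun t ht => ht.2) (fun u v hadj hu hv => ?_) hc
        refine mk_del_adj (del_adj_of hadj).1 (fun hmem => ?_)
        rw [Sym2.eq_iff] at hmem
        rcases hmem with ⟨-, h1'⟩ | ⟨h1', -⟩
        · exact hv.1 h1'
        · exact hu.1 h1'
      have hzx : ReachableWithin (G.deleteEdges {s(x, z)}) {t | t ≠ y} z x := by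
        refine rw_cons (mk_del_adj hzw (fun hmem => ?_)) hyz.ne' hmove
        rw [Sym2.eq_iff] at hmem
        rcases hmem with ⟨h1', -⟩ | ⟨-, h2'⟩
        · exact hxz.ne' h1'
        · exact hwx h2'
      exact hnxz (rw_symm hzx)
    · exact hnxy (rw_symm hc)
  · rcases rw_extract (x := x) hxy.ne' h1 with hc | hc
    · have hmove : ReachableWithin (G.deleteEdges {s(y, z)}) {t | t ≠ x} w y := by
        refine rw_mono (fun t ht => ht.2) (fun u v hadj hu hv => ?_) hc
        refine mk_del_adj (del_adj_of hadj).1 (fun hmem => ?_)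
        rw [Sym2.eq_iff] at hmem
        rcases hmem with ⟨-, h1'⟩ | ⟨h1', -⟩
        · exact hv.1 h1'
        · exact hu.1 h1'
      have hzy : ReachableWithin (G.deleteEdges {s(y, z)}) {t | t ≠ x} z y := by
        refine rw_cons (mk_del_adj hzw (fun hmem => ?_)) hxz.ne' hmove
        rw [Sym2.eq_iff] at hmem
        rcases hmem with ⟨h1', -⟩ | ⟨-, h2'⟩
        · exact hyz.ne' h1'
        · exact hwy h2'
      exact hnyz (rw_symm hzy)
    · exact hnxy hc

lemma tri_free [Fintype V] (hmin : MinimallyTwoConnected G) (hn : 4 ≤ Fintype.card V)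
    (hxy : G.Adj x y) (hxz : G.Adj x z) (hyz : G.Adj y z) : False := by
  have h1 := tri_nbhd hmin hxy hxz hyz
  have h2 := tri_nbhd hmin hyz hxy.symm hxz.symm
  obtain ⟨u, hux, huy, huz⟩ := exists_ne3 hn x y z
  obtain ⟨p, hp⟩ := tc_reach hmin.1 hxy.ne huy
  have hadj : ∀ s t : V, G.Adj s t → s ∉ ({y} : Set V) → t ∉ ({y} : Set V) →
      ((s = x ∨ s = z) ↔ (t = x ∨ t = z)) := by
    intro s t hst hs ht
    constructor
    · rintro (rfl | rfl)
      · rcases h2 t hst with h' | h'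
        · exact absurd h' ht
        · exact Or.inr h'
      · rcases h1 t hst with h' | h'
        · exact Or.inl h'
        · exact absurd h' ht
    · rintro (rfl | rfl)
      · rcases h2 s hst.symm with h' | h'
        · exact absurd h' hs
        · exact Or.inr h'
      · rcases h1 s hst.symm with h' | h'
        · exact Or.inl h'
        · exact absurd h' hs
  have hiff := walk_iff hadj p (fun v hv => hp v hv)
  rcases hiff.mp (Or.inl rfl) with h' | h'
  · exact hux h'
  · exact huz h'

lemma nbrs [Fintype V] (hmin : MinimallyTwoConnected G) (hn : 4 ≤ Fintype.card V) (v : V) :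
    ∃ x y, G.Adj v x ∧ G.Adj v y ∧ x ≠ y ∧ ¬ G.Adj x y := by
  obtain ⟨w, hwv, -, -⟩ := exists_ne3 hn v v v
  obtain ⟨u, huv, huw, -⟩ := exists_ne3 hn v w w
  have hr := tc_reach hmin.1 (Ne.symm hwv) huw
  obtain ⟨a, hva, -⟩ := first_step hr (Ne.symm huv)
  obtain ⟨u', hu'v, hu'a, -⟩ := exists_ne3 hn v a a
  have hr2 := tc_reach hmin.1 hva.ne hu'a
  obtain ⟨b', hvb', hb'm⟩ := first_step hr2 (Ne.symm hu'v)
  exact ⟨a, b', hva, hvb', Ne.symm hb'm,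
    fun hab => tri_free hmin hn hva hvb' hab⟩

lemma classes_big [Fintype V] {tau : V → Nat} (hmin : MinimallyTwoConnected G)
    (hn : 4 ≤ Fintype.card V) (htau : IsMVDColoring G tau) :
    ∀ v : V, ∃ w, w ≠ v ∧ tau w = tau v := by
  intro v
  obtain ⟨x, y, hvx, hvy, hxyne, hnadj⟩ := nbrs hmin hn v
  obtain ⟨S, hcut, hmono⟩ := htau x y hxyne hnadj
  have hvS : v ∈ S := by
    have hcut3 := hcut.2.2 (Walk.cons hvx.symm (Walk.cons hvy Walk.nil))
    obtain ⟨t, ht, htS⟩ := hcut3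
    simp only [Walk.support_cons, Walk.support_nil, List.mem_cons,
      List.mem_singleton, List.not_mem_nil, or_false] at ht
    rcases ht with rfl | rfl | rfl
    · exact absurd htS hcut.1
    · exact htS
    · exact absurd htS hcut.2.1
  obtain ⟨q, hq⟩ := tc_reach hmin.1 hvx.ne' hvy.ne'
  obtain ⟨w, hw, hwS⟩ := hcut.2.2 q
  exact ⟨w, hq w hw, hmono w hwS v hvS⟩

lemma count_le [Fintype V] {tau : V → Nat} (h : ∀ v : V, ∃ w, w ≠ v ∧ tau w = tau v) :
    (Set.range tau).ncard ≤ Fintype.card V / 2 := by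
  classical
  have hrange : Set.range tau = ↑(Finset.univ.image tau) := by
    ext k; simp
  rw [hrange, Set.ncard_coe_finset]
  rw [Nat.le_div_iff_mul_le (by norm_num : 0 < 2)]
  have hcard : Fintype.card V =
      ∑ cc ∈ Finset.univ.image tau, (Finset.univ.filter (fun v => tau v = cc)).card := by
    rw [← Finset.card_univ]
    exact Finset.card_eq_sum_card_fiberwise
      (fun x _ => Finset.mem_image_of_mem tau (Finset.mem_univ x))
  rw [hcard]
  have hfib : ∀ cc ∈ Finset.univ.image tau,
      2 ≤ (Finset.univ.filter (fun v => tau v = cc)).card := by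
    intro cc hcc
    rw [Finset.mem_image] at hcc
    obtain ⟨v, -, rfl⟩ := hcc
    obtain ⟨w, hwv, hwc⟩ := h v
    refine Finset.one_lt_card.mpr ⟨v, by simp, w, by simp [hwc], Ne.symm hwv⟩
  calc (Finset.univ.image tau).card * 2
      = ∑ _cc ∈ Finset.univ.image tau, 2 := by
        rw [Finset.sum_const, smul_eq_mul, mul_comm]
    _ ≤ ∑ cc ∈ Finset.univ.image tau, (Finset.univ.filter (fun v => tau v = cc)).card :=
        Finset.sum_le_sum hfib

end AuxMVD


section AuxMVD2

open SimpleGraph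

variable {G : SimpleGraph V}

lemma const_is_mvd (G : SimpleGraph V) : IsMVDColoring G (fun _ => 0) := by
  intro x y hne hnadj
  refine ⟨{u | u ≠ x ∧ u ≠ y}, ⟨by simp, by simp, fun p => ?_⟩, fun _ _ _ _ => rfl⟩
  cases p with
  | nil => exact absurd rfl hne
  | @cons _ c _ h q =>
    refine ⟨c, ?_, h.ne', fun hcy => hnadj (hcy ▸ h)⟩
    rw [Walk.support_cons]
    exact List.mem_cons_of_mem _ q.start_mem_support

lemma mvd_le_of {m : Nat}
    (hbound : ∀ tau : V → Nat, IsMVDColoring G tau → (Set.range tau).ncard ≤ m) :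
    mvd G ≤ m := by
  apply csSup_le
  · exact ⟨(Set.range (fun _ : V => 0)).ncard, ⟨fun _ => 0, const_is_mvd G, rfl⟩⟩
  · rintro k ⟨tau, htau, rfl⟩
    exact hbound tau htau

lemma mvd_ge [Fintype V] {tau : V → Nat} {k : Nat} (htau : IsMVDColoring G tau)
    (hk : (Set.range tau).ncard = k) : k ≤ mvd G := by
  classical
  apply le_csSup
  · refine ⟨Fintype.card V, fun j hj => ?_⟩
    obtain ⟨sig, hsig, rfl⟩ := hj
    have hr : Set.range sig = ↑(Finset.univ.image sig) := by ext; simp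
    rw [hr, Set.ncard_coe_finset]
    exact le_trans Finset.card_image_le (le_of_eq Finset.card_univ)
  · exact ⟨tau, htau, hk⟩

lemma fin_mod_eq {n a : Nat} (h : a < 2 * n) : a % n = if a < n then a else a - n := by
  split
  · exact Nat.mod_eq_of_lt (by assumption)
  · rw [Nat.mod_eq_sub_mod (by omega), Nat.mod_eq_of_lt (by omega)]

lemma cyc_adj {n : Nat} (hn : 4 ≤ n) {u v : Fin n} :
    (SimpleGraph.cycleGraph n).Adj u v ↔ (u.val + 1 = v.val ∨ v.val + 1 = u.val ∨
      (u.val = 0 ∧ v.val = n - 1) ∨ (v.val = 0 ∧ u.val = n - 1)) := by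
  have hu := u.isLt
  have hv := v.isLt
  have h1 : (u - v).val = (n - v.val + u.val) % n := by rw [Fin.sub_def]
  have h2 : (v - u).val = (n - u.val + v.val) % n := by rw [Fin.sub_def]
  rw [SimpleGraph.cycleGraph_adj', h1, h2, fin_mod_eq (by omega), fin_mod_eq (by omega)]
  split_ifs <;> omega

lemma cut_swap {x y : V} {S : Set V} (h : IsCutBetween G y x S) :
    IsCutBetween G x y S := by
  obtain ⟨h1, h2, h3⟩ := h
  refine ⟨h2, h1, fun p => ?_⟩
  obtain ⟨v, hv, hvS⟩ := h3 p.reverse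
  rw [Walk.support_reverse, List.mem_reverse] at hv
  exact ⟨v, hv, hvS⟩

lemma cycle_pair_cut {n : Nat} (hn : 4 ≤ n) {x y : Fin n} {p q : Nat}
    (hqn : q < n) (hpq : p < q)
    (hxout : ¬ (p < x.val ∧ x.val < q)) (hxp : x.val ≠ p) (hxq : x.val ≠ q)
    (hyin : p < y.val ∧ y.val < q) (hmod : p % (n / 2) = q % (n / 2)) :
    ∃ S : Set (Fin n), IsCutBetween (SimpleGraph.cycleGraph n) x y S ∧
      Monochromatic (fun i : Fin n => i.val % (n / 2)) S := by
  have hpn : p < n := lt_trans hpq hqn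
  refine ⟨{(⟨p, hpn⟩ : Fin n), (⟨q, hqn⟩ : Fin n)}, ⟨?_, ?_, fun pw => ?_⟩, ?_⟩
  · intro hmem
    rw [Set.mem_insert_iff, Set.mem_singleton_iff] at hmem
    rcases hmem with h | h
    · exact hxp (congrArg Fin.val h)
    · exact hxq (congrArg Fin.val h)
  · intro hmem
    rw [Set.mem_insert_iff, Set.mem_singleton_iff] at hmem
    rcases hmem with h | h
    · have hv : y.val = p := by rw [h]
      omega
    · have hv : y.val = q := by rw [h]
      omega
  · by_contra hcon
    push_neg at hcon
    have hadj : ∀ u w : Fin n, (SimpleGraph.cycleGraph n).Adj u w →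
        u ∉ ({(⟨p, hpn⟩ : Fin n), (⟨q, hqn⟩ : Fin n)} : Set (Fin n)) →
        w ∉ ({(⟨p, hpn⟩ : Fin n), (⟨q, hqn⟩ : Fin n)} : Set (Fin n)) →
        ((p < u.val ∧ u.val < q) ↔ (p < w.val ∧ w.val < q)) := by
      intro u w huw hu hw
      rw [cyc_adj hn] at huw
      rw [Set.mem_insert_iff, Set.mem_singleton_iff] at hu hw
      push_neg at hu hw
      have hu1 : u.val ≠ p := fun h => hu.1 (Fin.ext h)
      have hu2 : u.val ≠ q := fun h => hu.2 (Fin.ext h)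
      have hw1 : w.val ≠ p := fun h => hw.1 (Fin.ext h)
      have hw2 : w.val ≠ q := fun h => hw.2 (Fin.ext h)
      have h1 := u.isLt
      have h2 := w.isLt
      omega
    exact hxout ((walk_iff hadj pw hcon).mpr hyin)
  · intro u hu v hv
    rw [Set.mem_insert_iff, Set.mem_singleton_iff] at hu hv
    rcases hu with rfl | rfl <;> rcases hv with rfl | rfl
    · rfl
    · exact hmod
    · exact hmod.symm
    · rfl

lemma cycle_cut_lt {n : Nat} (hn : 4 ≤ n) {x y : Fin n} (hlt : x.val < y.val)
    (hnadj : ¬ (SimpleGraph.cycleGraph n).Adj x y) :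
    ∃ S : Set (Fin n), IsCutBetween (SimpleGraph.cycleGraph n) x y S ∧
      Monochromatic (fun i : Fin n => i.val % (n / 2)) S := by
  have hx := x.isLt
  have hy := y.isLt
  rw [cyc_adj hn] at hnadj
  push_neg at hnadj
  obtain ⟨c1, c2, c3, c4⟩ := hnadj
  set m := n / 2 with hm
  have hm2 : 2 ≤ m := by omega
  have hmn : 2 * m ≤ n ∧ n ≤ 2 * m + 1 := by omega
  by_cases hB : 1 ≤ x.val ∧ m + 1 ≤ y.val
  · obtain ⟨S, hS, hmono⟩ := cycle_pair_cut hn (x := y) (y := x)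
      (p := min (x.val - 1) (y.val - 1 - m)) (q := min (x.val - 1) (y.val - 1 - m) + m)
      (by omega) (by omega) (by omega) (by omega) (by omega) (by omega)
      (by rw [← hm]; exact (Nat.add_mod_right _ _).symm)
    exact ⟨S, cut_swap hS, hmono⟩
  · by_cases hA : x.val + 2 ≤ m ∧ y.val + 2 ≤ 2 * m
    · exact cycle_pair_cut hn
        (p := max (x.val + 1) (y.val + 1 - m)) (q := max (x.val + 1) (y.val + 1 - m) + m)
        (by omega) (by omega) (by omega) (by omega) (by omega) (by omega)
        (by rw [← hm]; exact (Nat.add_mod_right _ _).symm)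
    · have hsp : x.val = 0 ∧ y.val = n - 2 ∧ n = 2 * m + 1 := by omega
      exact cycle_pair_cut hn (p := m) (q := n - 1)
        (by omega) (by omega) (by omega) (by omega) (by omega) (by omega)
        (by rw [← hm]
            have h' : n - 1 = m + m := by omega
            rw [h', Nat.add_mod_right])

lemma cycle_cut {n : Nat} (hn : 4 ≤ n) {x y : Fin n} (hne : x ≠ y)
    (hnadj : ¬ (SimpleGraph.cycleGraph n).Adj x y) :
    ∃ S : Set (Fin n), IsCutBetween (SimpleGraph.cycleGraph n) x y S ∧
      Monochromatic (fun i : Fin n => i.val % (n / 2)) S := by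
  rcases Nat.lt_or_ge x.val y.val with h | h
  · exact cycle_cut_lt hn h hnadj
  · have h' : y.val < x.val :=
      lt_of_le_of_ne h (fun hc => hne (Fin.ext hc.symm))
    obtain ⟨S, hS, hmono⟩ := cycle_cut_lt hn h' (fun hc => hnadj hc.symm)
    exact ⟨S, cut_swap hS, hmono⟩

end AuxMVD2

/-- A minimally 2-connected graph of order `n ≥ 4` satisfies `mvd(G) ≤ ⌊n/2⌋`,
with equality when `G` is a cycle. -/

theorem stmt7 {V : Type*} [Fintype V] (G : SimpleGraph V)
    (hmin : MinimallyTwoConnected G) (hn : 4 ≤ Fintype.card V) :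
    mvd G ≤ Fintype.card V / 2 ∧
      (Nonempty (G ≃g SimpleGraph.cycleGraph (Fintype.card V)) →
        mvd G = Fintype.card V / 2) := by
  classical
  have hupper : mvd G ≤ Fintype.card V / 2 := by
    apply mvd_le_of
    intro tau htau
    exact count_le (classes_big hmin hn htau)
  refine ⟨hupper, fun he => ?_⟩
  obtain ⟨e⟩ := he
  set n := Fintype.card V with hndef
  set tau : V → Nat := fun v => (e v).val % (n / 2) with htaudef
  have htau : IsMVDColoring G tau := by
    intro x y hne hnadj
    have hne' : e x ≠ e y := fun h => hne (e.injective h)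
    have hnadj' : ¬ (SimpleGraph.cycleGraph n).Adj (e x) (e y) :=
      fun h => hnadj (e.map_adj_iff.mp h)
    obtain ⟨S', hcut, hmono⟩ := cycle_cut hn hne' hnadj'
    refine ⟨(fun v => e v) ⁻¹' S', ⟨hcut.1, hcut.2.1, fun p => ?_⟩, ?_⟩
    · obtain ⟨v', hv', hv'S⟩ := hcut.2.2 (p.map e.toHom)
      rw [SimpleGraph.Walk.support_map, List.mem_map] at hv'
      obtain ⟨v, hv, rfl⟩ := hv'
      exact ⟨v, hv, hv'S⟩
    · intro u hu v hv
      exact hmono _ hu _ hv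
  have hcount : (Set.range tau).ncard = n / 2 := by
    have h1 : Set.range tau = ↑(Finset.range (n / 2)) := by
      ext k
      simp only [Set.mem_range, Finset.coe_range, Set.mem_Iio]
      constructor
      · rintro ⟨v, rfl⟩
        exact Nat.mod_lt _ (by omega)
      · intro hk
        refine ⟨e.symm ⟨k, by omega⟩, ?_⟩
        show (e (e.symm ⟨k, by omega⟩)).val % (n / 2) = k
        rw [e.apply_symm_apply]
        exact Nat.mod_eq_of_lt hk
    rw [h1, Set.ncard_coe_finset, Finset.card_range]
  exact le_antisymm hupper (mvd_ge htau hcount)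
end

section
/- If G is a minimally 2-connected graph of order n ≥ 4, then G contains no triangles. -/
open SimpleGraph

variable {V : Type*}

section Aux

variable {G : SimpleGraph V}

lemma TwoConnected.reach (h : TwoConnected G) (v a b : V) (ha : a ≠ v) (hb : b ≠ v) :
    ReachableWithin G {u | u ≠ v} a b :=
  (h.2 v).2 a ha b hb

/-- Replace uses of the edge `xy` in a walk by a detour through `z`. -/
lemma detour_walk {x y z : V}
    (hxz : (G.deleteEdges {s(x,y)}).Adj x z)
    (hzy : (G.deleteEdges {s(x,y)}).Adj z y)
    {S : Set V} (hzS : z ∈ S) :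
    ∀ {a b : V} (p : G.Walk a b), (∀ v ∈ p.support, v ∈ S) →
      ∃ q : (G.deleteEdges {s(x,y)}).Walk a b, ∀ v ∈ q.support, v ∈ S := by
  intro a b p
  induction p with
  | nil =>
    intro h
    exact ⟨SimpleGraph.Walk.nil, h⟩
  | @cons a c b h p ih =>
    intro hs
    obtain ⟨q, hq⟩ := ih (fun v hv => hs v (by simp [hv]))
    have ha : a ∈ S := hs a (by simp)
    by_cases he : s(a,c) = s(x,y)
    · rcases Sym2.eq_iff.mp he with ⟨rfl, rfl⟩ | ⟨rfl, rfl⟩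
      · refine ⟨SimpleGraph.Walk.cons hxz (SimpleGraph.Walk.cons hzy q), ?_⟩
        intro v hv
        simp only [SimpleGraph.Walk.support_cons, List.mem_cons] at hv
        rcases hv with rfl | rfl | hv
        · exact ha
        · exact hzS
        · exact hq v hv
      · refine ⟨SimpleGraph.Walk.cons hzy.symm (SimpleGraph.Walk.cons hxz.symm q), ?_⟩
        intro v hv
        simp only [SimpleGraph.Walk.support_cons, List.mem_cons] at hv
        rcases hv with rfl | rfl | hv
        · exact ha
        · exact hzS
        · exact hq v hv
    · refine ⟨SimpleGraph.Walk.cons (by rw [SimpleGraph.deleteEdges_adj]; exact ⟨h, by simpa using he⟩) q, ?_⟩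
      intro v hv
      simp only [SimpleGraph.Walk.support_cons, List.mem_cons] at hv
      rcases hv with rfl | hv
      · exact ha
      · exact hq v hv

/-- If `x` and `y` are reachable within `S` in `G - xy`, then any walk in `G`
within `S` can be converted to one in `G - xy`. -/
lemma patch_walk {x y : V} {S : Set V}
    (hxy : ReachableWithin (G.deleteEdges {s(x,y)}) S x y) :
    ∀ {a b : V} (p : G.Walk a b), (∀ v ∈ p.support, v ∈ S) →
      ReachableWithin (G.deleteEdges {s(x,y)}) S a b := by
  intro a b p
  induction p with
  | nil =>
    intro h
    exact ⟨SimpleGraph.Walk.nil, h⟩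
  | @cons a c b h p ih =>
    intro hs
    obtain ⟨q, hq⟩ := ih (fun v hv => hs v (by simp [hv]))
    have ha : a ∈ S := hs a (by simp)
    by_cases he : s(a,c) = s(x,y)
    · rcases Sym2.eq_iff.mp he with ⟨rfl, rfl⟩ | ⟨rfl, rfl⟩
      · obtain ⟨r, hr⟩ := hxy
        refine ⟨r.append q, ?_⟩
        intro v hv
        rcases (SimpleGraph.Walk.mem_support_append_iff _ _).mp hv with hv | hv
        · exact hr v hv
        · exact hq v hv
      · obtain ⟨r, hr⟩ := hxy
        refine ⟨r.reverse.append q, ?_⟩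
        intro v hv
        rcases (SimpleGraph.Walk.mem_support_append_iff _ _).mp hv with hv | hv
        · exact hr v (by simpa using hv)
        · exact hq v hv
    · refine ⟨SimpleGraph.Walk.cons (by rw [SimpleGraph.deleteEdges_adj]; exact ⟨h, by simpa using he⟩) q, ?_⟩
      intro v hv
      simp only [SimpleGraph.Walk.support_cons, List.mem_cons] at hv
      rcases hv with rfl | hv
      · exact ha
      · exact hq v hv

/-- Key consequence of minimality: for a triangle `x y z`, every `x`–`y` walk
avoiding `z` must use the edge `xy`. -/
lemma key_lemma [Fintype V] (hmin : MinimallyTwoConnected G)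
    (hn : 4 ≤ Fintype.card V) {x y z : V}
    (hxy : G.Adj x y) (hxz : G.Adj x z) (hyz : G.Adj y z) :
    ∀ p : G.Walk x y, (∀ v ∈ p.support, v ≠ z) → s(x,y) ∈ p.edges := by
  have hxy' : x ≠ y := hxy.ne
  have hxz' : x ≠ z := hxz.ne
  have hyz' : y ≠ z := hyz.ne
  have hG'xz : (G.deleteEdges {s(x,y)}).Adj x z := by
    rw [SimpleGraph.deleteEdges_adj]
    refine ⟨hxz, ?_⟩
    simp only [Set.mem_singleton_iff, Sym2.eq_iff]
    push_neg
    exact ⟨fun _ => hyz'.symm, fun h => absurd h hxy'⟩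
  have hG'zy : (G.deleteEdges {s(x,y)}).Adj z y := by
    rw [SimpleGraph.deleteEdges_adj]
    refine ⟨hyz.symm, ?_⟩
    simp only [Set.mem_singleton_iff, Sym2.eq_iff]
    push_neg
    exact ⟨fun h => absurd h.symm hxz', fun _ => hxy'.symm⟩
  have hdel := hmin.2 s(x,y) (G.mem_edgeSet.mpr hxy)
  have h3 : 3 ≤ Nat.card V := hmin.1.1
  obtain ⟨v, hv⟩ : ∃ v : V, ¬ ConnectedOn (G.deleteEdges {s(x,y)}) {u | u ≠ v} := by
    by_contra hall
    push_neg at hall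
    exact hdel ⟨h3, hall⟩
  have hnt : Nontrivial V := Fintype.one_lt_card_iff_nontrivial.mp (by omega)
  -- the cut vertex must be `z`
  have hvz : v = z := by
    by_contra hne
    apply hv
    constructor
    · obtain ⟨u, hu⟩ := exists_ne v
      exact ⟨u, hu⟩
    · intro a ha b hb
      obtain ⟨p, hp⟩ := hmin.1.reach v a b ha hb
      exact detour_walk hG'xz hG'zy (Ne.symm hne : z ∈ {u | u ≠ v}) p hp
  rw [hvz] at hv
  intro p hp
  by_contra hedge
  apply hv
  have hsub : ∀ e ∈ p.edges, e ∈ (G.deleteEdges {s(x,y)}).edgeSet := by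
    intro e he
    rw [SimpleGraph.edgeSet_deleteEdges]
    exact ⟨p.edges_subset_edgeSet he, by rintro rfl; exact hedge he⟩
  have hreach : ReachableWithin (G.deleteEdges {s(x,y)}) {u | u ≠ z} x y := by
    refine ⟨p.transfer _ hsub, ?_⟩
    intro u hu
    rw [SimpleGraph.Walk.support_transfer] at hu
    exact hp u hu
  refine ⟨⟨x, hxz'⟩, ?_⟩
  intro a ha b hb
  obtain ⟨q, hq⟩ := hmin.1.reach z a b ha hb
  exact patch_walk hreach q hq

/-- Two avoiding walks to the two ends of a forced edge give a contradiction. -/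
lemma no_two {x y z w : V}
    (key : ∀ p : G.Walk x y, (∀ v ∈ p.support, v ≠ z) → s(x,y) ∈ p.edges)
    (q1 : G.Walk w x) (h1 : ∀ v ∈ q1.support, v ≠ y ∧ v ≠ z)
    (q2 : G.Walk w y) (h2 : ∀ v ∈ q2.support, v ≠ x ∧ v ≠ z) : False := by
  have hedge := key (q1.reverse.append q2) ?_
  · rw [SimpleGraph.Walk.edges_append] at hedge
    rcases List.mem_append.mp hedge with h | h
    · rw [SimpleGraph.Walk.edges_reverse, List.mem_reverse] at h
      exact (h1 y (q1.snd_mem_support_of_mem_edges h)).1 rfl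
    · exact (h2 x (q2.fst_mem_support_of_mem_edges h)).1 rfl
  · intro u hu
    rcases (SimpleGraph.Walk.mem_support_append_iff _ _).mp hu with hu | hu
    · exact (h1 u (by simpa using hu)).2
    · exact (h2 u hu).2

/-- A walk from `w` to `x` avoiding `z` can be truncated at the first hit of
`{x, y}`, giving a walk avoiding the other two triangle vertices. -/
lemma split_walk {x y z : V} (hxy : x ≠ y) :
    ∀ {w : V} (p : G.Walk w x), w ≠ x → w ≠ y → (∀ v ∈ p.support, v ≠ z) →
      (∃ q : G.Walk w x, ∀ v ∈ q.support, v ≠ y ∧ v ≠ z) ∨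
      (∃ q : G.Walk w y, ∀ v ∈ q.support, v ≠ x ∧ v ≠ z) := by
  intro w p
  induction p with
  | nil => intro h1 _ _; exact absurd rfl h1
  | @cons w c x h p ih =>
    intro hw1 hw2 hz
    have hwz : w ≠ z := hz w (by simp)
    have hcz : c ≠ z := hz c (by simp)
    by_cases hc1 : c = x
    · subst hc1
      left
      refine ⟨SimpleGraph.Walk.cons h SimpleGraph.Walk.nil, ?_⟩
      intro v hv
      simp only [SimpleGraph.Walk.support_cons, SimpleGraph.Walk.support_nil,
        List.mem_cons, List.mem_singleton, List.not_mem_nil, or_false] at hv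
      rcases hv with rfl | rfl
      · exact ⟨hw2, hwz⟩
      · exact ⟨hxy, hcz⟩
    · by_cases hc2 : c = y
      · subst hc2
        right
        refine ⟨SimpleGraph.Walk.cons h SimpleGraph.Walk.nil, ?_⟩
        intro v hv
        simp only [SimpleGraph.Walk.support_cons, SimpleGraph.Walk.support_nil,
          List.mem_cons, List.mem_singleton, List.not_mem_nil, or_false] at hv
        rcases hv with rfl | rfl
        · exact ⟨hw1, hwz⟩
        · exact ⟨hxy.symm, hcz⟩
      · rcases ih hxy hc1 hc2 (fun v hv => hz v (by simp [hv])) with ⟨q, hq⟩ | ⟨q, hq⟩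
        · left
          refine ⟨SimpleGraph.Walk.cons h q, ?_⟩
          intro v hv
          simp only [SimpleGraph.Walk.support_cons, List.mem_cons] at hv
          rcases hv with rfl | hv
          · exact ⟨hw2, hwz⟩
          · exact hq v hv
        · right
          refine ⟨SimpleGraph.Walk.cons h q, ?_⟩
          intro v hv
          simp only [SimpleGraph.Walk.support_cons, List.mem_cons] at hv
          rcases hv with rfl | hv
          · exact ⟨hw1, hwz⟩
          · exact hq v hv

end Aux

/-- A minimally 2-connected graph of order `n ≥ 4` is triangle-free. -/
theorem stmt8 {V : Type*} [Fintype V] (G : SimpleGraph V)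
    (hmin : MinimallyTwoConnected G) (hn : 4 ≤ Fintype.card V) :
    G.CliqueFree 3 := by
  classical
  intro t ht
  obtain ⟨x, y, z, hxy', hxz', hyz', rfl⟩ := Finset.card_eq_three.mp ht.2
  have hxy : G.Adj x y := ht.1 (by simp) (by simp) hxy'
  have hxz : G.Adj x z := ht.1 (by simp) (by simp) hxz'
  have hyz : G.Adj y z := ht.1 (by simp) (by simp) hyz'
  -- a fourth vertex
  obtain ⟨w, hw⟩ : ∃ w : V, w ∉ ({x, y, z} : Finset V) := by
    by_contra hc
    push_neg at hc
    have hsub : (Finset.univ : Finset V) ⊆ {x, y, z} := fun v _ => hc v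
    have := Finset.card_le_card hsub
    rw [Finset.card_univ, ht.2] at this
    omega
  simp only [Finset.mem_insert, Finset.mem_singleton, not_or] at hw
  obtain ⟨hwx, hwy, hwz⟩ := hw
  -- the three key facts from minimality
  have key1 := key_lemma hmin hn hxy hxz hyz
  have key2 := key_lemma hmin hn hxz hxy (hyz.symm)
  have key3 := key_lemma hmin hn hyz (hxy.symm) (hxz.symm)
  -- the three reachability statements
  set P1 := ∃ q : G.Walk w x, ∀ v ∈ q.support, v ≠ y ∧ v ≠ z with hP1
  set P2 := ∃ q : G.Walk w y, ∀ v ∈ q.support, v ≠ x ∧ v ≠ z with hP2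
  set P3 := ∃ q : G.Walk w z, ∀ v ∈ q.support, v ≠ x ∧ v ≠ y with hP3
  have d1 : P1 ∨ P2 := by
    obtain ⟨p, hp⟩ := hmin.1.reach z w x hwz hxz.ne
    exact split_walk hxy.ne p hwx hwy hp
  have d2 : P2 ∨ P3 := by
    obtain ⟨p, hp⟩ := hmin.1.reach x w y hwx hxy.ne.symm
    rcases split_walk hyz.ne p hwy hwz hp with ⟨q, hq⟩ | ⟨q, hq⟩
    · exact Or.inl ⟨q, fun v hv => ⟨(hq v hv).2, (hq v hv).1⟩⟩
    · exact Or.inr ⟨q, fun v hv => ⟨(hq v hv).2, (hq v hv).1⟩⟩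
  have d3 : P1 ∨ P3 := by
    obtain ⟨p, hp⟩ := hmin.1.reach y w x hwy hxy.ne
    rcases split_walk hxz.ne p hwx hwz hp with ⟨q, hq⟩ | ⟨q, hq⟩
    · exact Or.inl ⟨q, fun v hv => ⟨(hq v hv).2, (hq v hv).1⟩⟩
    · exact Or.inr ⟨q, hq⟩
  -- pairwise contradictions
  have c12 : P1 → P2 → False := by
    rintro ⟨q1, h1⟩ ⟨q2, h2⟩
    exact no_two key1 q1 h1 q2 h2
  have c13 : P1 → P3 → False := by
    rintro ⟨q1, h1⟩ ⟨q2, h2⟩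
    exact no_two key2 q1 (fun v hv => ⟨(h1 v hv).2, (h1 v hv).1⟩)
      q2 (fun v hv => ⟨(h2 v hv).1, (h2 v hv).2⟩)
  have c23 : P2 → P3 → False := by
    rintro ⟨q1, h1⟩ ⟨q2, h2⟩
    exact no_two key3 q1 (fun v hv => ⟨(h1 v hv).2, (h1 v hv).1⟩)
      q2 (fun v hv => ⟨(h2 v hv).2, (h2 v hv).1⟩)
  rcases d1 with h1 | h2
  · rcases d2 with h2 | h3
    · exact c12 h1 h2
    · exact c13 h1 h3
  · rcases d3 with h1 | h3
    · exact c12 h1 h2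
    · exact c23 h2 h3
end

section
/- Let G be a connected graph of order n whose blocks are all minimally 2-connected triangle-free graphs. Then mvd(G) = n if and only if G is a tree. -/
open SimpleGraph

variable {V : Type*}

section Aux

variable [DecidableEq V] {G : SimpleGraph V}

lemma reachableWithin_mono {S T : Set V} (hST : S ⊆ T) {x y : V}
    (h : ReachableWithin G S x y) : ReachableWithin G T x y := by
  obtain ⟨p, hp⟩ := h
  exact ⟨p, fun v hv => hST (hp v hv)⟩

lemma reachableWithin_of_mem_support {a b x y : V} (r : G.Walk a b)
    (hx : x ∈ r.support) (hy : y ∈ r.support) :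
    ReachableWithin G {v | v ∈ r.support} x y := by
  refine ⟨(r.takeUntil x hx).reverse.append (r.takeUntil y hy), ?_⟩
  intro v hv
  rw [Walk.mem_support_append_iff] at hv
  rcases hv with hv | hv
  · rw [Walk.support_reverse, List.mem_reverse] at hv
    exact r.support_takeUntil_subset hx hv
  · exact r.support_takeUntil_subset hy hv

lemma mem_tail_of_mem_support_closed {v x : V} {c : G.Walk v v} (hc : ¬ c.Nil)
    (hx : x ∈ c.support) : x ∈ c.support.tail := by
  cases c with
  | nil => simp at hc
  | cons h q =>
    rw [Walk.support_cons] at hx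
    rw [Walk.support_cons, List.tail_cons]
    rcases List.mem_cons.mp hx with rfl | hx
    · exact q.end_mem_support
    · exact hx

lemma mem_support_rotate_iff {u v x : V} {c : G.Walk v v} (hc : c.IsCycle)
    (hu : u ∈ c.support) : x ∈ (c.rotate u hu).support ↔ x ∈ c.support := by
  have h1 : ¬ (c.rotate u hu).Nil := (hc.rotate hu).not_nil
  have h2 : ¬ c.Nil := hc.not_nil
  constructor
  · intro h
    exact List.mem_of_mem_tail
      ((Walk.support_rotate c u hu).perm.mem_iff.mp (mem_tail_of_mem_support_closed h1 h))
  · intro h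
    exact List.mem_of_mem_tail
      ((Walk.support_rotate c u hu).perm.mem_iff.mpr (mem_tail_of_mem_support_closed h2 h))

lemma cycle_connectedOn {v : V} (c : G.Walk v v) (hc : c.IsCycle) :
    ConnectedOn G {x | x ∈ c.support} :=
  ⟨⟨v, c.start_mem_support⟩, fun x hx y hy => reachableWithin_of_mem_support c hx hy⟩

lemma cycle_noCutVertexOn {v : V} (c : G.Walk v v) (hc : c.IsCycle) :
    NoCutVertexOn G {x | x ∈ c.support} := by
  intro u hu x hx y hy
  have hu' : u ∈ c.support := hu
  set d := c.rotate u hu' with hd_def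
  have hd : d.IsCycle := hc.rotate hu'
  obtain ⟨w1, h1, q, hq⟩ := Walk.not_nil_iff.mp hd.not_nil
  -- q : walk w1 → u  ; d = cons h1 q
  have hqnd : q.support.Nodup := by
    have := hd.2
    rw [hq, Walk.support_cons, List.tail_cons] at this
    exact this
  have hqrev : ¬ q.reverse.Nil := by
    rw [Walk.nil_iff_length_eq, Walk.length_reverse]
    intro h0
    have : d.length = 1 := by rw [hq, Walk.length_cons, h0]
    have := hd.three_le_length
    omega
  obtain ⟨w2, h2, r, hr⟩ := Walk.not_nil_iff.mp hqrev
  -- r : walk w2 → w1 ; q.reverse = cons h2 r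
  have hqrs : q.reverse.support = u :: r.support := by rw [hr, Walk.support_cons]
  have hur : u ∉ r.support := by
    have : q.reverse.support.Nodup := by rw [Walk.support_reverse]; exact List.nodup_reverse.mpr hqnd
    rw [hqrs] at this
    exact (List.nodup_cons.mp this).1
  -- membership translation
  have memr : ∀ z, z ∈ c.support → z ≠ u → z ∈ r.support := by
    intro z hz hzu
    have : z ∈ d.support := (mem_support_rotate_iff hc hu').mpr hz
    rw [hq, Walk.support_cons] at this
    rcases List.mem_cons.mp this with rfl | hzq
    · exact absurd rfl hzu
    · have : z ∈ q.reverse.support := by rw [Walk.support_reverse, List.mem_reverse]; exact hzq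
      rw [hqrs] at this
      rcases List.mem_cons.mp this with rfl | h
      · exact absurd rfl hzu
      · exact h
  have rmem : ∀ z, z ∈ r.support → z ∈ c.support ∧ z ≠ u := by
    intro z hz
    have hz' : z ∈ q.reverse.support := by rw [hqrs]; exact List.mem_cons_of_mem _ hz
    rw [Walk.support_reverse, List.mem_reverse] at hz'
    have : z ∈ d.support := by rw [hq, Walk.support_cons]; exact List.mem_cons_of_mem _ hz'
    refine ⟨(mem_support_rotate_iff hc hu').mp this, ?_⟩
    rintro rfl
    exact hur hz
  have hx' : x ∈ r.support := memr x hx.1 (by simpa using hx.2)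
  have hy' : y ∈ r.support := memr y hy.1 (by simpa using hy.2)
  refine reachableWithin_mono ?_ (reachableWithin_of_mem_support r hx' hy')
  intro z hz
  obtain ⟨h1', h2'⟩ := rmem z hz
  exact ⟨h1', by simpa using h2'⟩

end Aux

/-- For a connected graph whose blocks are all trivial or minimally 2-connected
triangle-free, `mvd(G) = n` iff `G` is a tree. -/
theorem stmt11 {V : Type*} [Fintype V] (G : SimpleGraph V) (hG : G.Connected)
    (hB : ∀ C : Set V, IsBlock G C →
      ((G.induce C).CliqueFree 3 ∧
        (C.ncard ≤ 2 ∨ MinimallyTwoConnected (G.induce C)))) :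
    mvd G = Fintype.card V ↔ G.IsTree := by
  classical
  set K : Set ℕ := {k | ∃ τ : V → ℕ, IsMVDColoring G τ ∧ (Set.range τ).ncard = k} with hK
  have hbdd : ∀ k ∈ K, k ≤ Fintype.card V := by
    rintro k ⟨τ, _, rfl⟩
    calc (Set.range τ).ncard = (τ '' Set.univ).ncard := by rw [Set.image_univ]
      _ ≤ (Set.univ : Set V).ncard := Set.ncard_image_le Set.finite_univ
      _ = Fintype.card V := by rw [Set.ncard_univ, Nat.card_eq_fintype_card]
  have hBdd : BddAbove K := ⟨Fintype.card V, hbdd⟩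
  constructor
  · -- mvd = n → tree
    intro hmvd
    by_contra hnt
    have hcard : 1 ≤ Fintype.card V := by
      have : Nonempty V := hG.nonempty
      exact Fintype.card_pos
    have hKne : K.Nonempty := by
      by_contra hne
      rw [Set.not_nonempty_iff_eq_empty] at hne
      have : mvd G = 0 := by
        rw [show mvd G = sSup K from rfl, hne, csSup_empty]
        rfl
      omega
    have hmem : Fintype.card V ∈ K := by
      have := Nat.sSup_mem hKne hBdd
      rwa [show sSup K = Fintype.card V from hmvd] at this
    obtain ⟨τ, hτ, hτcard⟩ := hmem
    -- τ is injective
    have hinj : Function.Injective τ := by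
      have h1 : Set.range τ = ↑(Finset.univ.image τ) := by
        rw [Finset.coe_image, Finset.coe_univ, Set.image_univ]
      rw [h1, Set.ncard_coe_finset] at hτcard
      have : (Finset.univ.image τ).card = (Finset.univ : Finset V).card := by
        rw [hτcard, Finset.card_univ]
      rw [Finset.card_image_iff] at this
      intro u v huv
      exact this (by simp) (by simp) huv
    -- get a cycle
    have hac : ¬ G.IsAcyclic := fun ha => hnt ⟨hG, ha⟩
    rw [SimpleGraph.IsAcyclic] at hac
    push_neg at hac
    obtain ⟨v, c, hc⟩ := hac
    set S : Set V := {x | x ∈ c.support} with hSdef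
    -- maximal superset of S that is connected with no cut vertex
    have hfam : S ∈ {C : Set V | S ⊆ C ∧ ConnectedOn G C ∧ NoCutVertexOn G C} :=
      ⟨subset_refl _, cycle_connectedOn c hc, cycle_noCutVertexOn c hc⟩
    obtain ⟨B, hBmem, hBmax⟩ := Set.Finite.exists_maximalFor id
      {C : Set V | S ⊆ C ∧ ConnectedOn G C ∧ NoCutVertexOn G C} (Set.toFinite _) ⟨S, hfam⟩
    obtain ⟨hSB, hBconn, hBnocut⟩ := hBmem
    have hBblock : IsBlock G B := by
      refine ⟨hBconn, hBnocut, fun C hBC hCconn hCnocut => ?_⟩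
      exact (hBmax ⟨hSB.trans hBC, hCconn, hCnocut⟩ hBC).antisymm hBC
    -- three distinct vertices in S
    have htnd : c.support.tail.Nodup := hc.2
    have htlen : 3 ≤ c.support.tail.length := by
      have := hc.three_le_length
      have hsl : c.support.length = c.length + 1 := c.length_support
      have : c.support.tail.length = c.length := by
        rw [List.length_tail, hsl]
        omega
      omega
    obtain ⟨a, b, e, rest, htl⟩ : ∃ a b e rest, c.support.tail = a :: b :: e :: rest := by
      match hl : c.support.tail with
      | [] => rw [hl] at htlen; simp at htlen
      | [a] => rw [hl] at htlen; simp at htlen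
      | [a, b] => rw [hl] at htlen; simp at htlen
      | a :: b :: e :: rest => exact ⟨a, b, e, rest, rfl⟩
    have hmemS : ∀ z ∈ c.support.tail, z ∈ S := fun z hz => List.mem_of_mem_tail hz
    have haB : a ∈ B := hSB (hmemS a (by rw [htl]; simp))
    have hbB : b ∈ B := hSB (hmemS b (by rw [htl]; simp))
    have heB : e ∈ B := hSB (hmemS e (by rw [htl]; simp))
    rw [htl] at htnd
    have hab : a ≠ b := by
      intro h; rw [List.nodup_cons] at htnd; exact htnd.1 (by rw [h]; simp)
    have hae : a ≠ e := by
      intro h; rw [List.nodup_cons] at htnd; exact htnd.1 (by rw [h]; simp)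
    have hbe : b ≠ e := by
      intro h
      have := htnd.of_cons
      rw [List.nodup_cons] at this; exact this.1 (by rw [h]; simp)
    -- triangle-free gives a nonadjacent pair in B
    have hcf := (hB B hBblock).1
    have key : ∃ x y, x ∈ B ∧ y ∈ B ∧ x ≠ y ∧ ¬ G.Adj x y := by
      by_contra hcon
      push_neg at hcon
      have hadj : ∀ x y, x ∈ B → y ∈ B → x ≠ y → G.Adj x y := fun x y hx hy hxy =>
        hcon x y hx hy hxy
      have : (G.induce B).IsNClique 3 {⟨a, haB⟩, ⟨b, hbB⟩, ⟨e, heB⟩} := by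
        rw [is3Clique_triple_iff]
        refine ⟨?_, ?_, ?_⟩
        · simpa using hadj a b haB hbB hab
        · simpa using hadj a e haB heB hae
        · simpa using hadj b e hbB heB hbe
      exact hcf _ this
    obtain ⟨x, y, hxB, hyB, hxy, hnadj⟩ := key
    -- apply the MVD coloring
    obtain ⟨S', hcut, hmono⟩ := hτ x y hxy hnadj
    obtain ⟨p⟩ := hG.preconnected x y
    obtain ⟨v', hv'p, hv'S⟩ := hcut.2.2 p
    have hsingle : S' ⊆ {v'} := by
      intro z hz
      have := hmono z hz v' hv'S
      exact Set.mem_singleton_iff.mpr (hinj this)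
    by_cases hvB : v' ∈ B
    · have hxB' : x ∈ B \ {v'} := ⟨hxB, fun h => hcut.1 (by rw [Set.mem_singleton_iff.mp h]; exact hv'S)⟩
      have hyB' : y ∈ B \ {v'} := ⟨hyB, fun h => hcut.2.1 (by rw [Set.mem_singleton_iff.mp h]; exact hv'S)⟩
      obtain ⟨q, hq⟩ := hBnocut v' hvB x hxB' y hyB'
      obtain ⟨z, hzq, hzS⟩ := hcut.2.2 q
      have := hsingle hzS
      exact (hq z hzq).2 this
    · have hxB' := hxB
      obtain ⟨q, hq⟩ := hBconn.2 x hxB y hyB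
      obtain ⟨z, hzq, hzS⟩ := hcut.2.2 q
      have hz := hsingle hzS
      rw [Set.mem_singleton_iff] at hz
      subst hz
      exact hvB (hq z hzq)
  · -- tree → mvd = n
    intro hT
    have : Nonempty V := hG.nonempty
    set τ : V → ℕ := fun v => ((Fintype.equivFin V) v : ℕ) with hτdef
    have hinj : Function.Injective τ := fun u v h => by
      apply (Fintype.equivFin V).injective
      exact Fin.val_injective h
    have hMVD : IsMVDColoring G τ := by
      intro x y hxy hnadj
      obtain ⟨p, hp, huniq⟩ := hT.existsUnique_path x y
      have hplen0 : p.length ≠ 0 := fun h0 => hxy (Walk.eq_of_length_eq_zero h0)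
      have hplen1 : p.length ≠ 1 := fun h1 => hnadj (Walk.adj_of_length_eq_one h1)
      obtain ⟨w, hadj, q, hpq⟩ := Walk.not_nil_iff.mp
        (fun hnil => hplen0 (Walk.nil_iff_length_eq.mp hnil))
      have hwx : w ≠ x := fun h => G.irrefl (h ▸ hadj)
      have hwy : w ≠ y := fun h => hnadj (h ▸ hadj)
      refine ⟨{w}, ⟨?_, ?_, ?_⟩, ?_⟩
      · simp [hwx.symm]
      · simp [hwy.symm]
      · intro r
        refine ⟨w, ?_, rfl⟩
        have hrp : (r.toPath : G.Walk x y) = p := huniq _ r.toPath.2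
        have hw : w ∈ p.support := by
          rw [hpq, Walk.support_cons]
          exact List.mem_cons_of_mem _ q.start_mem_support
        rw [← hrp] at hw
        exact r.support_toPath_subset hw
      · intro u hu v hv
        rw [Set.mem_singleton_iff] at hu hv
        rw [hu, hv]
    have hmemK : Fintype.card V ∈ K := by
      refine ⟨τ, hMVD, ?_⟩
      rw [← Set.image_univ, Set.ncard_image_of_injective _ hinj, Set.ncard_univ,
        Nat.card_eq_fintype_card]
    apply le_antisymm
    · exact csSup_le' hbdd
    · exact le_csSup hBdd hmemK
end

section
/- There is no connected graph G of order n, all of whose blocks are minimally 2-connected triangle-free graphs, with mvd(G) = n − 1. -/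
open SimpleGraph

variable {V : Type*}

set_option linter.unusedSectionVars false
section Aux

variable {V : Type*} [DecidableEq V] {G : SimpleGraph V}

/-- A walk between distinct nonadjacent vertices has an internal vertex. -/
lemma internal_vertex {x y : V} (w : G.Walk x y) (hxy : x ≠ y) (hadj : ¬ G.Adj x y) :
    ∃ v ∈ w.support, v ≠ x ∧ v ≠ y := by
  cases w with
  | nil => exact absurd rfl hxy
  | @cons _ b _ h q =>
    by_cases hb : b = y
    · subst hb; exact absurd h hadj
    · exact ⟨b, by simp [q.start_mem_support], h.ne', hb⟩

/-- Any two vertices on a walk are reachable within the walk's support. -/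
lemma reachableWithin_support {u v x y : V} (p : G.Walk u v)
    (hx : x ∈ p.support) (hy : y ∈ p.support) :
    ReachableWithin G {s | s ∈ p.support} x y := by
  refine ⟨(p.takeUntil x hx).reverse.append (p.takeUntil y hy), ?_⟩
  intro s hs
  rw [SimpleGraph.Walk.mem_support_append_iff] at hs
  rcases hs with h | h
  · rw [SimpleGraph.Walk.support_reverse, List.mem_reverse] at h
    exact p.support_takeUntil_subset hx h
  · exact p.support_takeUntil_subset hy h

lemma reachableWithin_congr {S T : Set V} (h : S = T) {x y : V} :
    ReachableWithin G S x y → ReachableWithin G T x y := by subst h; exact id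

/-- The endpoint does not appear in a proper `takeUntil` of a path. -/
lemma endpoint_not_mem_takeUntil {b z x : V} (q : G.Walk b z) (hnd : q.support.Nodup)
    (hx : x ∈ q.support) (hxz : x ≠ z) : z ∉ (q.takeUntil x hx).support := by
  intro hzin
  have hspec := q.take_spec hx
  have hsupp : q.support = (q.takeUntil x hx).support ++ (q.dropUntil x hx).support.tail := by
    rw [← SimpleGraph.Walk.support_append, hspec]
  rw [hsupp, List.nodup_append] at hnd
  have hz2 : z ∈ (q.dropUntil x hx).support.tail :=
    SimpleGraph.Walk.end_mem_tail_support_of_ne hxz _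
  exact hnd.2.2 z hzin z hz2 rfl

open SimpleGraph in
/-- In a cycle through `z`, any two vertices other than `z` are reachable avoiding `z`. -/
lemma cycle_del_vertex {z : V} {c : G.Walk z z} (hc : c.IsCycle) {x y : V}
    (hx : x ∈ c.support) (hy : y ∈ c.support) (hxz : x ≠ z) (hyz : y ≠ z) :
    ReachableWithin G ({s | s ∈ c.support} \ {z}) x y := by
  cases c with
  | nil => exact absurd rfl (hc.ne_nil)
  | @cons _ b _ h q =>
    have hnd : q.support.Nodup := by
      have := hc.support_nodup
      simpa using this
    have hx' : x ∈ q.support := by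
      have hx2 := hx
      rw [SimpleGraph.Walk.support_cons, List.mem_cons] at hx2
      exact hx2.resolve_left hxz
    have hy' : y ∈ q.support := by
      have hy2 := hy
      rw [SimpleGraph.Walk.support_cons, List.mem_cons] at hy2
      exact hy2.resolve_left hyz
    refine ⟨((q.takeUntil x hx').reverse.append (q.takeUntil y hy')).copy rfl rfl, ?_⟩
    intro s hs
    rw [SimpleGraph.Walk.support_copy, SimpleGraph.Walk.mem_support_append_iff] at hs
    have hs' : s ∈ (q.takeUntil x hx').support ∨ s ∈ (q.takeUntil y hy').support := by
      rcases hs with h' | h'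
      · rw [SimpleGraph.Walk.support_reverse, List.mem_reverse] at h'; exact Or.inl h'
      · exact Or.inr h'
    constructor
    · show s ∈ (SimpleGraph.Walk.cons h q).support
      rw [SimpleGraph.Walk.support_cons]
      rcases hs' with h' | h'
      · exact List.mem_cons_of_mem _ (q.support_takeUntil_subset hx' h')
      · exact List.mem_cons_of_mem _ (q.support_takeUntil_subset hy' h')
    · simp only [Set.mem_singleton_iff]
      rcases hs' with h' | h'
      · intro hsz; subst hsz; exact endpoint_not_mem_takeUntil q hnd hx' hxz h'
      · intro hsz; subst hsz; exact endpoint_not_mem_takeUntil q hnd hy' hyz h'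

/-- For a nonnil closed walk, support membership equals tail-support membership. -/
lemma closed_mem_support_tail {v : V} (c : G.Walk v v) (hn : ¬ c.Nil) (s : V) :
    s ∈ c.support ↔ s ∈ c.support.tail := by
  cases c with
  | nil => exact absurd SimpleGraph.Walk.Nil.nil hn
  | @cons _ b _ h q =>
    rw [SimpleGraph.Walk.support_cons, List.tail_cons, List.mem_cons]
    constructor
    · rintro (rfl | h')
      · exact q.end_mem_support
      · exact h'
    · exact fun h' => Or.inr h'

lemma cycle_support_connectedOn {a : V} (c : G.Walk a a) :
    ConnectedOn G {s | s ∈ c.support} :=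
  ⟨⟨a, c.start_mem_support⟩, fun x hx y hy => reachableWithin_support c hx hy⟩

lemma cycle_support_noCutVertexOn {a : V} {c : G.Walk a a} (hc : c.IsCycle) :
    NoCutVertexOn G {s | s ∈ c.support} := by
  intro z hz x hx y hy
  set c' := c.rotate z hz with hc'def
  have hc' : c'.IsCycle := hc.rotate hz
  have hE : {s | s ∈ c.support} = {s | s ∈ c'.support} := by
    ext s
    simp only [Set.mem_setOf_eq]
    rw [closed_mem_support_tail c hc.not_nil, closed_mem_support_tail c' hc'.not_nil]
    exact ((SimpleGraph.Walk.support_rotate c z hz).mem_iff (a := s)).symm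
  rw [hE] at hx hy ⊢
  exact cycle_del_vertex hc' hx.1 hy.1 hx.2 hy.2

set_option linter.unusedVariables false

/-- Every connected, cut-vertex-free set extends to a block. -/
lemma exists_block_superset [Fintype V] {C₀ : Set V}
    (h1 : ConnectedOn G C₀) (h2 : NoCutVertexOn G C₀) :
    ∃ B : Set V, C₀ ⊆ B ∧ IsBlock G B := by
  set s : Set (Set V) := {S | C₀ ⊆ S ∧ ConnectedOn G S ∧ NoCutVertexOn G S} with hs
  obtain ⟨B, hBs, hmax⟩ := Set.Finite.exists_maximalFor Set.ncard s (Set.toFinite s)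
    ⟨C₀, subset_rfl, h1, h2⟩
  refine ⟨B, hBs.1, hBs.2.1, hBs.2.2, ?_⟩
  intro C hBC hc hn
  have hCs : C ∈ s := ⟨hBs.1.trans hBC, hc, hn⟩
  have hle : B.ncard ≤ C.ncard := Set.ncard_le_ncard hBC C.toFinite
  have := hmax hCs hle
  exact (Set.eq_of_subset_of_ncard_le hBC this.ge C.toFinite).symm

lemma exists_third {α : Type*} [Fintype α] (h : 2 < Fintype.card α) (x y : α) :
    ∃ z, z ≠ x ∧ z ≠ y := by
  classical
  by_contra h'
  push_neg at h'
  have hsub : (Finset.univ : Finset α) ⊆ {x, y} := by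
    intro z _
    rcases eq_or_ne z x with rfl | hzx
    · simp
    · simp [h' z hzx]
  have := Finset.card_le_card hsub
  have h2 : ({x, y} : Finset α).card ≤ 2 := Finset.card_insert_le x {y} |>.trans (by simp)
  rw [Finset.card_univ] at this
  omega

/-- A vertex cut in `G` separating two vertices of a 2-connected set `B`
meets `B` in at least two vertices. -/
lemma cut_pair_in_block [Fintype V] {B : Set V}
    (h2 : TwoConnected (G.induce B))
    {x y : V} (hx : x ∈ B) (hy : y ∈ B) {S : Set V} (hcut : IsCutBetween G x y S) :
    ∃ p ∈ S ∩ B, ∃ q ∈ S ∩ B, p ≠ q := by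
  classical
  by_contra hcon
  push_neg at hcon
  haveI : Fintype ↥B := Fintype.ofFinite ↥B
  have hcard : 2 < Fintype.card ↥B := by
    have := h2.1; rw [Nat.card_eq_fintype_card] at this; omega
  -- obtain a vertex v of B avoiding x, y with S ∩ B ⊆ {v}
  obtain ⟨v, hvB, hvx, hvy, hsub⟩ :
      ∃ v ∈ B, v ≠ x ∧ v ≠ y ∧ S ∩ B ⊆ {v} := by
    by_cases hne : (S ∩ B).Nonempty
    · obtain ⟨v, hv⟩ := hne
      refine ⟨v, hv.2, ?_, ?_, ?_⟩
      · rintro rfl; exact hcut.1 hv.1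
      · rintro rfl; exact hcut.2.1 hv.1
      · intro p hp; exact hcon p hp v hv
    · obtain ⟨z3, hz1, hz2⟩ := exists_third hcard ⟨x, hx⟩ ⟨y, hy⟩
      refine ⟨z3.1, z3.2, fun h => hz1 (Subtype.ext h), fun h => hz2 (Subtype.ext h), ?_⟩
      intro p hp; exact absurd ⟨p, hp⟩ hne
  have hxne : (⟨x, hx⟩ : ↥B) ∈ {u : ↥B | u ≠ ⟨v, hvB⟩} := fun h => hvx (congrArg Subtype.val h).symm
  have hyne : (⟨y, hy⟩ : ↥B) ∈ {u : ↥B | u ≠ ⟨v, hvB⟩} := fun h => hvy (congrArg Subtype.val h).symm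
  obtain ⟨pw, hpw⟩ := (h2.2 ⟨v, hvB⟩).2 _ hxne _ hyne
  let f : G.induce B →g G := ⟨Subtype.val, fun {a b} h => h⟩
  have := hcut.2.2 (pw.map f)
  obtain ⟨s, hsmem, hsS⟩ := this
  rw [SimpleGraph.Walk.support_map, List.mem_map] at hsmem
  obtain ⟨u, hu, rfl⟩ := hsmem
  have : (u : V) ∈ S ∩ B := ⟨hsS, u.2⟩
  have huv : (u : V) = v := hsub this
  exact (hpw u hu) (Subtype.ext huv)

/-- With `n - 1` colors, there is at most one repeated color pair. -/
lemma pairs_eq [Fintype V] {τ : V → ℕ}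
    (hcard : (Set.range τ).ncard = Fintype.card V - 1) (hn : 2 ≤ Fintype.card V)
    {u v u' v' : V} (huv : u ≠ v) (ht : τ u = τ v) (huv' : u' ≠ v') (ht' : τ u' = τ v') :
    ({u, v} : Set V) = {u', v'} := by
  classical
  by_contra hne
  -- find w₂ ∈ {u', v'} not in {u, v}, with partner w₂'
  obtain ⟨w₂, w₂', hw2mem, hw2u, hw2v, hw2ne, hw2t⟩ :
      ∃ w₂ w₂' : V, ({w₂, w₂'} : Set V) = {u', v'} ∧ w₂ ≠ u ∧ w₂ ≠ v ∧ w₂' ≠ w₂ ∧ τ w₂ = τ w₂' := by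
    by_cases hu' : u' ∈ ({u, v} : Set V)
    · by_cases hv' : v' ∈ ({u, v} : Set V)
      · exfalso
        apply hne
        rcases hu' with rfl | rfl
        · rcases hv' with h | rfl
          · exact absurd h.symm huv'
          · rfl
        · rcases hv' with rfl | h
          · exact Set.pair_comm _ _
          · exact absurd h.symm huv'
      · simp only [Set.mem_insert_iff, Set.mem_singleton_iff, not_or] at hv'
        exact ⟨v', u', Set.pair_comm v' u', hv'.1, hv'.2, huv', ht'.symm⟩
    · simp only [Set.mem_insert_iff, Set.mem_singleton_iff, not_or] at hu'
      exact ⟨u', v', rfl, hu'.1, hu'.2, huv'.symm, ht'⟩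
  -- every color is attained away from v and w₂
  have himg : Finset.univ.image τ ⊆ ((Finset.univ.erase v).erase w₂).image τ := by
    intro c hc
    rw [Finset.mem_image] at hc
    obtain ⟨a, -, rfl⟩ := hc
    rw [Finset.mem_image]
    by_cases hav : a = v
    · exact ⟨u, by simp [Finset.mem_erase, huv, hw2u.symm], by rw [ht, hav]⟩
    · by_cases haw : a = w₂
      · by_cases hwv : w₂' = v
        · refine ⟨u, by simp [Finset.mem_erase, huv, hw2u.symm], ?_⟩
          rw [ht, ← hwv, ← hw2t, haw]
        · refine ⟨w₂', by simp [Finset.mem_erase, hwv, hw2ne], ?_⟩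
          rw [← hw2t, haw]
      · exact ⟨a, by simp [Finset.mem_erase, hav, haw], rfl⟩
  have h1 : (Finset.univ.image τ).card = Fintype.card V - 1 := by
    have : (Set.range τ) = ↑(Finset.univ.image τ) := by
      rw [Finset.coe_image, Finset.coe_univ, Set.image_univ]
    rw [this, Set.ncard_coe_finset] at hcard
    exact hcard
  have h2 : ((Finset.univ.erase v).erase w₂).card = Fintype.card V - 2 := by
    rw [Finset.card_erase_of_mem (by simp [Finset.mem_erase, hw2v]),
      Finset.card_erase_of_mem (by simp), Finset.card_univ]
    omega
  have := (Finset.card_le_card himg).trans (Finset.card_image_le)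
  rw [h1, h2] at this
  omega

/-- The constant coloring is an MVD coloring of any graph. -/
lemma constant_isMVD : IsMVDColoring G (fun _ => 0) := by
  intro x y hxy hadj
  refine ⟨({x, y} : Set V)ᶜ, ⟨by simp, by simp, ?_⟩, fun _ _ _ _ => rfl⟩
  intro p
  obtain ⟨v, hv, hvx, hvy⟩ := internal_vertex p hxy hadj
  exact ⟨v, hv, by simp [hvx, hvy]⟩

open SimpleGraph in
lemma cycle_support_ncard {a : V} {c : G.Walk a a} (hc : c.IsCycle) :
    3 ≤ {s | s ∈ c.support}.ncard := by
  classical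
  have hnd : c.support.tail.Nodup := hc.support_nodup
  have hlen : 3 ≤ c.support.tail.length := by
    rw [List.length_tail, SimpleGraph.Walk.length_support]
    have := hc.three_le_length
    omega
  have h1 : {s | s ∈ c.support.tail}.ncard = c.support.tail.length := by
    rw [← List.coe_toFinset, Set.ncard_coe_finset, List.toFinset_card_of_nodup hnd]
  have hsub : {s | s ∈ c.support.tail} ⊆ {s | s ∈ c.support} :=
    fun s hs => List.mem_of_mem_tail hs
  have h2 := Set.ncard_le_ncard hsub (c.support.finite_toSet)
  omega

end Aux

/-- No connected graph whose blocks are all trivial or minimally 2-connected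
triangle-free has `mvd(G) = n - 1`. -/
theorem stmt12 {V : Type*} [Fintype V] (G : SimpleGraph V) (hG : G.Connected)
    (hB : ∀ C : Set V, IsBlock G C →
      ((G.induce C).CliqueFree 3 ∧
        (C.ncard ≤ 2 ∨ MinimallyTwoConnected (G.induce C)))) :
    mvd G ≠ Fintype.card V - 1 := by
  classical
  intro hmvd
  have hne : Nonempty V := hG.nonempty
  set K := {k | ∃ τ : V → ℕ, IsMVDColoring G τ ∧ (Set.range τ).ncard = k} with hKdef
  have hmvdK : mvd G = sSup K := rfl
  have hKbdd : BddAbove K := by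
    refine ⟨Fintype.card V, fun k hk => ?_⟩
    obtain ⟨τ, -, rfl⟩ := hk
    calc (Set.range τ).ncard = (τ '' Set.univ).ncard := by rw [Set.image_univ]
      _ ≤ (Set.univ : Set V).ncard := Set.ncard_image_le Set.finite_univ
      _ = Fintype.card V := by rw [Set.ncard_univ, Nat.card_eq_fintype_card]
  by_cases hA : G.IsAcyclic
  · -- G is a tree: the injective coloring is an MVD-coloring, so mvd G = n.
    set σ : V → ℕ := fun v => ((Fintype.equivFin V) v : ℕ) with hσ
    have hinj : Function.Injective σ := fun a b h =>
      (Fintype.equivFin V).injective (Fin.val_injective h)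
    have hmv : IsMVDColoring G σ := by
      intro x y hxy hadj
      obtain ⟨w₀⟩ := hG.preconnected x y
      obtain ⟨v, hv, hvx, hvy⟩ := internal_vertex (w₀.toPath : G.Walk x y) hxy hadj
      refine ⟨{v}, ⟨by simp [Ne.symm hvx], by simp [Ne.symm hvy], ?_⟩, ?_⟩
      · intro p
        have hppath : p.toPath = w₀.toPath := hA.path_unique _ _
        refine ⟨v, ?_, rfl⟩
        apply p.support_toPath_subset
        rw [hppath]
        exact hv
      · intro a ha b hb
        simp only [Set.mem_singleton_iff] at ha hb
        rw [ha, hb]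
    have hmem : Fintype.card V ∈ K := by
      refine ⟨σ, hmv, ?_⟩
      rw [← Set.image_univ, Set.ncard_image_of_injective _ hinj, Set.ncard_univ,
        Nat.card_eq_fintype_card]
    have hle := le_csSup hKbdd hmem
    rw [← hmvdK, hmvd] at hle
    have : 0 < Fintype.card V := Fintype.card_pos
    omega
  · -- G has a cycle, which extends to a nontrivial block.
    unfold SimpleGraph.IsAcyclic at hA
    push_neg at hA
    obtain ⟨a, c, hc⟩ := hA
    obtain ⟨B, hC0B, hblock⟩ := exists_block_superset (cycle_support_connectedOn c)
      (cycle_support_noCutVertexOn hc)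
    obtain ⟨hcf, hdisj⟩ := hB B hblock
    have h3 : 3 ≤ B.ncard :=
      le_trans (cycle_support_ncard hc) (Set.ncard_le_ncard hC0B B.toFinite)
    have h2conn : TwoConnected (G.induce B) := by
      rcases hdisj with h | h
      · omega
      · exact h.1
    have hn3 : 3 ≤ Fintype.card V := by
      have := Set.ncard_le_ncard (Set.subset_univ B) Set.finite_univ
      rw [Set.ncard_univ, Nat.card_eq_fintype_card] at this
      omega
    have hKne : K.Nonempty := by
      refine ⟨1, (fun _ => 0), constant_isMVD, ?_⟩
      rw [Set.range_const]
      simp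
    have hsup : (Fintype.card V - 1) ∈ K := by
      rw [← hmvd, hmvdK]
      exact Nat.sSup_mem hKne hKbdd
    obtain ⟨τ, hτmvd, hτcard⟩ := hsup
    have pairuniq : ∀ u v u' v' : V, u ≠ v → τ u = τ v → u' ≠ v' → τ u' = τ v' →
        ({u, v} : Set V) = {u', v'} := fun u v u' v' h1 h2 h3' h4 =>
      pairs_eq hτcard (by omega) h1 h2 h3' h4
    haveI : Fintype ↥B := Fintype.ofFinite ↥B
    have hcardB : 2 < Fintype.card ↥B := by
      have := h2conn.1
      rw [Nat.card_eq_fintype_card] at this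
      omega
    -- B contains a nonadjacent pair (otherwise it contains a triangle)
    obtain ⟨x, hxB, y, hyB, hxy, hnadj⟩ :
        ∃ x ∈ B, ∃ y ∈ B, x ≠ y ∧ ¬ G.Adj x y := by
      by_contra hcon
      push_neg at hcon
      obtain ⟨a1, b1, c1, h1, h2, h3'⟩ := Fintype.two_lt_card_iff.mp hcardB
      refine hcf {a1, b1, c1} (SimpleGraph.is3Clique_triple_iff.mpr ⟨?_, ?_, ?_⟩)
      · exact hcon a1 a1.2 b1 b1.2 (fun h => h1 (Subtype.ext h))
      · exact hcon a1 a1.2 c1 c1.2 (fun h => h2 (Subtype.ext h))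
      · exact hcon b1 b1.2 c1 c1.2 (fun h => h3' (Subtype.ext h))
    obtain ⟨S, hScut, hSmono⟩ := hτmvd x y hxy hnadj
    obtain ⟨p, hpSB, q, hqSB, hpq⟩ := cut_pair_in_block h2conn hxB hyB hScut
    have hτpq : τ p = τ q := hSmono p hpSB.1 q hqSB.1
    -- every vertex of B is adjacent to p and to q
    have adjall : ∀ w ∈ B, ∀ r : V, (r = p ∨ r = q) → w ≠ r → G.Adj w r := by
      intro w hwB r hrpq hwr
      by_contra hadj
      obtain ⟨S', hScut', hSmono'⟩ := hτmvd w r hwr hadj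
      have hrB : r ∈ B := by
        rcases hrpq with rfl | rfl
        exacts [hpSB.2, hqSB.2]
      obtain ⟨p', hpSB', q', hqSB', hpq'⟩ := cut_pair_in_block h2conn hwB hrB hScut'
      have hpair : ({p', q'} : Set V) = {p, q} :=
        pairuniq p' q' p q hpq' (hSmono' p' hpSB'.1 q' hqSB'.1) hpq hτpq
      have hrS' : r ∈ S' := by
        have hr2 : r ∈ ({p', q'} : Set V) := by
          rw [hpair]
          rcases hrpq with rfl | rfl <;> simp
        simp only [Set.mem_insert_iff, Set.mem_singleton_iff] at hr2
        rcases hr2 with rfl | rfl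
        exacts [hpSB'.1, hqSB'.1]
      exact hScut'.2.1 hrS'
    obtain ⟨c3, hc3p, hc3q⟩ := exists_third hcardB (⟨p, hpSB.2⟩ : ↥B) ⟨q, hqSB.2⟩
    have hadj_pq : G.Adj p q := (adjall q hqSB.2 p (Or.inl rfl) (Ne.symm hpq)).symm
    have hadj_cp : G.Adj ↑c3 p := adjall ↑c3 c3.2 p (Or.inl rfl) (fun h => hc3p (Subtype.ext h))
    have hadj_cq : G.Adj ↑c3 q := adjall ↑c3 c3.2 q (Or.inr rfl) (fun h => hc3q (Subtype.ext h))
    have i1 : (G.induce B).Adj c3 ⟨p, hpSB.2⟩ := hadj_cp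
    have i2 : (G.induce B).Adj c3 ⟨q, hqSB.2⟩ := hadj_cq
    have i3 : (G.induce B).Adj ⟨p, hpSB.2⟩ ⟨q, hqSB.2⟩ := hadj_pq
    exact hcf {c3, ⟨p, hpSB.2⟩, ⟨q, hqSB.2⟩}
      (SimpleGraph.is3Clique_triple_iff.mpr ⟨i1, i2, i3⟩)
end

section
/- Let G be a connected graph of order n whose blocks are all minimally 2-connected triangle-free graphs. Then mvd(G) = n − 2 if and only if G is a unicyclic graph whose unique cycle is C_4. -/
open SimpleGraph

variable {V : Type*}

namespace MVDProof

open SimpleGraph Walk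

variable {G : SimpleGraph V} {τ : V → ℕ}

lemma walk_cons_of_ne {x y : V} (p : G.Walk x y) (hne : x ≠ y) :
    ∃ (u : V) (h : G.Adj x u) (q : G.Walk u y), p = Walk.cons h q := by
  cases p with
  | nil => exact absurd rfl hne
  | cons h q => exact ⟨_, h, q, rfl⟩

lemma neighbor_cut {x y : V} (hne : x ≠ y) (hadj : ¬ G.Adj x y) :
    IsCutBetween G x y {v | G.Adj x v} := by
  refine ⟨by simp, by simpa using hadj, ?_⟩
  intro p
  obtain ⟨u, h, q, rfl⟩ := walk_cons_of_ne p hne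
  exact ⟨u, by simp, h⟩

lemma const_mvd (G : SimpleGraph V) : IsMVDColoring G (fun _ => 0) := by
  intro x y hne hadj
  exact ⟨_, neighbor_cut hne hadj, fun _ _ _ _ => rfl⟩

lemma mvdSet_mem_bound [Fintype V] {k : ℕ}
    (hk : k ∈ {k | ∃ τ : V → ℕ, IsMVDColoring G τ ∧ (Set.range τ).ncard = k}) :
    k ≤ Fintype.card V := by
  obtain ⟨τ, -, rfl⟩ := hk
  calc (Set.range τ).ncard = (τ '' Set.univ).ncard := by rw [Set.image_univ]
    _ ≤ (Set.univ : Set V).ncard := Set.ncard_image_le (Set.toFinite _)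
    _ = Fintype.card V := by rw [Set.ncard_univ, Nat.card_eq_fintype_card]

lemma one_mem_mvdSet [Fintype V] [Nonempty V] (G : SimpleGraph V) :
    1 ∈ {k | ∃ τ : V → ℕ, IsMVDColoring G τ ∧ (Set.range τ).ncard = k} :=
  ⟨fun _ => 0, const_mvd G, by simp⟩

lemma mvd_le_of_forall [Fintype V] [Nonempty V] {n0 : ℕ}
    (h : ∀ τ : V → ℕ, IsMVDColoring G τ → (Set.range τ).ncard ≤ n0) : mvd G ≤ n0 := by
  apply csSup_le ⟨1, one_mem_mvdSet G⟩
  rintro k ⟨τ, hτ, rfl⟩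
  exact h τ hτ

lemma le_mvd_of_mem [Fintype V] {k : ℕ}
    (h : ∃ τ : V → ℕ, IsMVDColoring G τ ∧ (Set.range τ).ncard = k) : k ≤ mvd G :=
  le_csSup ⟨Fintype.card V, fun _ hj => mvdSet_mem_bound hj⟩ h

lemma range_ncard_le_compl [Fintype V] (τ : V → ℕ) (D : Finset V)
    (h : ∀ v ∈ D, ∃ w, w ∉ D ∧ τ w = τ v) :
    (Set.range τ).ncard ≤ Fintype.card V - D.card := by
  classical
  have hsub : Set.range τ ⊆ τ '' ↑(Finset.univ \ D) := by
    rintro _ ⟨v, rfl⟩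
    by_cases hv : v ∈ D
    · obtain ⟨w, hw, hwe⟩ := h v hv
      exact ⟨w, by simp [hw], hwe⟩
    · exact ⟨v, by simp [hv], rfl⟩
  calc (Set.range τ).ncard ≤ (τ '' ↑(Finset.univ \ D)).ncard :=
        Set.ncard_le_ncard hsub (Set.toFinite _)
    _ ≤ (↑(Finset.univ \ D) : Set V).ncard := Set.ncard_image_le (Set.toFinite _)
    _ = (Finset.univ \ D).card := Set.ncard_coe_finset _
    _ = Fintype.card V - D.card := by
        rw [Finset.card_sdiff_of_subset (Finset.subset_univ _), Finset.card_univ]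

lemma twins_image_card (s : Finset V) (τ : V → ℕ)
    (h : ∀ u ∈ s, ∃ z ∈ s, z ≠ u ∧ τ z = τ u) :
    2 * (s.image τ).card ≤ s.card := by
  classical
  rw [Finset.card_eq_sum_card_fiberwise (f := τ) (t := s.image τ)
    (fun x hx => Finset.mem_image_of_mem τ hx)]
  have hbig : ∀ b ∈ s.image τ, 2 ≤ (s.filter (fun x => τ x = b)).card := by
    intro b hb
    obtain ⟨u, hu, rfl⟩ := Finset.mem_image.mp hb
    obtain ⟨z, hz, hzu, hze⟩ := h u hu
    refine Finset.one_lt_card.mpr ⟨u, by simp [hu], z, by simp [hz, hze], fun e => hzu e.symm⟩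
  calc 2 * (s.image τ).card = ∑ _b ∈ s.image τ, 2 := by
        rw [Finset.sum_const, smul_eq_mul, mul_comm]
    _ ≤ _ := Finset.sum_le_sum hbig

lemma range_ncard_le_sub3 [Fintype V] (τ : V → ℕ) (s : Finset V) (h5 : 5 ≤ s.card)
    (h : ∀ u ∈ s, ∃ z ∈ s, z ≠ u ∧ τ z = τ u) :
    (Set.range τ).ncard ≤ Fintype.card V - 3 := by
  classical
  have h1 : (Set.range τ).ncard = (Finset.univ.image τ).card := by
    rw [← Set.ncard_coe_finset, Finset.coe_image, Finset.coe_univ, Set.image_univ]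
  have h2 : Finset.univ.image τ = (Finset.univ \ s).image τ ∪ s.image τ := by
    rw [← Finset.image_union, Finset.sdiff_union_of_subset (Finset.subset_univ _)]
  have h3 : (Finset.univ.image τ).card ≤ (Fintype.card V - s.card) + (s.image τ).card := by
    rw [h2]
    refine (Finset.card_union_le _ _).trans ?_
    gcongr
    · exact (Finset.card_image_le).trans (by
        rw [Finset.card_sdiff_of_subset (Finset.subset_univ _), Finset.card_univ])
  have h4 := twins_image_card s τ h
  have h6 : s.card ≤ Fintype.card V := Finset.card_le_univ s
  omega

end MVDProof

namespace MVDProof2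

open SimpleGraph Walk

variable {G : SimpleGraph V}

lemma support_has_edge {u v w : V} (p : G.Walk u v) (hw : w ∈ p.support) :
    w = v ∨ ∃ e ∈ p.edges, w ∈ e := by
  induction p with
  | nil => left; simpa using hw
  | @cons a b c h q ih =>
    rw [Walk.support_cons, List.mem_cons] at hw
    rcases hw with rfl | hw
    · right; exact ⟨s(w, b), by simp, Sym2.mem_mk_left _ _⟩
    · rcases ih hw with h1 | ⟨e, he, hwe⟩
      · left; exact h1
      · right; exact ⟨e, by simp [he], hwe⟩

lemma cycle_support_mem_edge {v w : V} (c : G.Walk v v) (hc : ¬ c.Nil) (hw : w ∈ c.support) :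
    ∃ e ∈ c.edges, w ∈ e := by
  rcases support_has_edge c hw with rfl | h
  · cases c with
    | nil => simp at hc
    | @cons a b c h q => exact ⟨s(w, b), by simp, Sym2.mem_mk_left _ _⟩
  · exact h

lemma mem_tail_of_mem_support_closed {v : V} (c : G.Walk v v) (hnil : ¬ c.Nil) {x : V}
    (hx : x ∈ c.support) : x ∈ c.support.tail := by
  cases c with
  | nil => simp at hnil
  | @cons a b c h q =>
    rw [Walk.support_cons, List.mem_cons] at hx
    rw [Walk.support_cons, List.tail_cons]
    rcases hx with rfl | hx
    · exact q.end_mem_support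
    · exact hx

lemma cons_concat_isCycle {x u u' : V} (hx1 : G.Adj x u) (r : G.Walk u u') (hx2 : G.Adj u' x)
    (hr : r.IsPath) (hxr : x ∉ r.support) (hne : u ≠ u') :
    (Walk.cons hx1 (r.concat hx2)).IsCycle := by
  have hxu' : u' ≠ x := hx2.ne
  rw [Walk.isCycle_def]
  refine ⟨?_, by simp, ?_⟩
  · rw [Walk.isTrail_def, Walk.edges_cons, Walk.edges_concat, List.concat_eq_append,
      List.nodup_cons, List.mem_append, List.nodup_append]
    refine ⟨?_, hr.isTrail.edges_nodup, by simp, ?_⟩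
    · rintro (hmem | hmem)
      · exact hxr (r.fst_mem_support_of_mem_edges hmem)
      · rw [List.mem_singleton, Sym2.eq_iff] at hmem
        rcases hmem with ⟨h1', h2'⟩ | ⟨-, h2'⟩
        · exact hxu' h1'.symm
        · exact hne h2'
    · intro e he
      simp only [List.mem_singleton]
      rintro _ rfl rfl
      exact hxr (r.snd_mem_support_of_mem_edges he)
  · rw [Walk.support_cons, List.tail_cons, Walk.support_concat,
      List.nodup_append]
    exact ⟨hr.support_nodup, by simp, fun a ha b hb hab => hxr (by simp at hb; subst hb; subst hab; exact ha)⟩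

lemma triangle_isCycle {x y z : V} (h1 : G.Adj x y) (h2 : G.Adj y z) (h3 : G.Adj z x) :
    (Walk.cons h1 (Walk.cons h2 (Walk.cons h3 Walk.nil))).IsCycle := by
  have hxy := h1.ne
  have hyz := h2.ne
  have hzx := h3.ne
  rw [Walk.isCycle_def]
  refine ⟨?_, by simp, ?_⟩
  · rw [Walk.isTrail_def]
    simp only [Walk.edges_cons, Walk.edges_nil, List.nodup_cons, List.mem_cons,
      List.not_mem_nil, or_false, List.mem_singleton, List.nodup_nil, and_true, Sym2.eq_iff]
    tauto
  · simp only [Walk.support_cons, Walk.support_nil, List.tail_cons]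
    simp only [List.nodup_cons, List.mem_cons, List.not_mem_nil, or_false,
      List.mem_singleton, List.nodup_nil, and_true, not_or]
    exact ⟨⟨hyz, fun h => hxy h.symm⟩, fun h => hzx h, fun h => h⟩

lemma walk_length3_decomp {v : V} (p : G.Walk v v) (h : p.length = 3) :
    ∃ (b c : V) (_ : G.Adj v b) (_ : G.Adj b c) (_ : G.Adj c v), True := by
  cases p with
  | nil => simp at h
  | cons h1 p =>
    cases p with
    | nil => simp at h
    | cons h2 p =>
      cases p with
      | nil => simp at h
      | cons h3 p =>
        cases p with
        | nil => exact ⟨_, _, h1, h2, h3, trivial⟩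
        | cons h4 p => simp [Walk.length_cons] at h

lemma walk_length4_decomp {v : V} (p : G.Walk v v) (h : p.length = 4) :
    ∃ (b c d : V) (h1 : G.Adj v b) (h2 : G.Adj b c) (h3 : G.Adj c d) (h4 : G.Adj d v),
      p = Walk.cons h1 (Walk.cons h2 (Walk.cons h3 (Walk.cons h4 Walk.nil))) := by
  cases p with
  | nil => simp at h
  | cons h1 p =>
    cases p with
    | nil => simp at h
    | cons h2 p =>
      cases p with
      | nil => simp at h
      | cons h3 p =>
        cases p with
        | nil => simp at h
        | cons h4 p =>
          cases p with
          | nil => exact ⟨_, _, _, h1, h2, h3, h4, rfl⟩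
          | cons h5 p => simp [Walk.length_cons] at h

lemma cycle4_distinct {v b c d : V} {h1 : G.Adj v b} {h2 : G.Adj b c} {h3 : G.Adj c d}
    {h4 : G.Adj d v}
    (hc : (Walk.cons h1 (Walk.cons h2 (Walk.cons h3 (Walk.cons h4 Walk.nil)))).IsCycle) :
    v ≠ b ∧ v ≠ c ∧ v ≠ d ∧ b ≠ c ∧ b ≠ d ∧ c ≠ d := by
  have hnd := hc.2
  simp only [Walk.support_cons, Walk.support_nil, List.tail_cons, List.nodup_cons,
    List.mem_cons, List.not_mem_nil, or_false, List.mem_singleton, List.nodup_nil,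
    and_true, not_or] at hnd
  obtain ⟨⟨hbc, hbd, hbv⟩, ⟨hcd, hcv⟩, hdv, -⟩ := hnd
  exact ⟨h1.ne, fun h => hcv h.symm, fun h => hdv h.symm, hbc, hbd, hcd⟩

end MVDProof2

namespace MVDProof3

open SimpleGraph Walk MVDProof2

variable {G : SimpleGraph V}

lemma rw_refl {S : Set V} {a : V} (ha : a ∈ S) : ReachableWithin G S a a :=
  ⟨Walk.nil, by simpa using ha⟩

lemma rw_adj {S : Set V} {a b : V} (h : G.Adj a b) (ha : a ∈ S) (hb : b ∈ S) :
    ReachableWithin G S a b :=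
  ⟨Walk.cons h Walk.nil, by simp [ha, hb]⟩

lemma exists_block (G : SimpleGraph V) [Fintype V] {S : Set V}
    (h1 : ConnectedOn G S) (h2 : NoCutVertexOn G S) :
    ∃ B, S ⊆ B ∧ IsBlock G B := by
  classical
  let F : Set (Set V) := {C | S ⊆ C ∧ ConnectedOn G C ∧ NoCutVertexOn G C}
  have hFfin : F.Finite := Set.toFinite F
  have hne : F.Nonempty := ⟨S, subset_rfl, h1, h2⟩
  obtain ⟨B, hBF, hmax⟩ := Set.Finite.exists_maximalFor (fun C => C.ncard) F hFfin hne
  refine ⟨B, hBF.1, hBF.2.1, hBF.2.2, ?_⟩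
  intro C hBC hC1 hC2
  have hCF : C ∈ F := ⟨hBF.1.trans hBC, hC1, hC2⟩
  have heq := hmax hCF (Set.ncard_le_ncard hBC (Set.toFinite _))
  exact (Set.eq_of_subset_of_ncard_le hBC heq (Set.toFinite _)).symm

lemma tri_adj {x y z a b : V} (h1 : G.Adj x y) (h2 : G.Adj y z) (h3 : G.Adj z x)
    (ha : a ∈ ({x, y, z} : Set V)) (hb : b ∈ ({x, y, z} : Set V)) (hab : a ≠ b) :
    G.Adj a b := by
  simp only [Set.mem_insert_iff, Set.mem_singleton_iff] at ha hb
  rcases ha with rfl | rfl | rfl <;> rcases hb with rfl | rfl | rfl <;>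
    first
      | exact absurd rfl hab
      | exact h1 | exact h2 | exact h3 | exact h1.symm | exact h2.symm | exact h3.symm

lemma no_triangle [Fintype V] (G : SimpleGraph V)
    (hB : ∀ C : Set V, IsBlock G C → ((G.induce C).CliqueFree 3 ∧
        (C.ncard ≤ 2 ∨ MinimallyTwoConnected (G.induce C))))
    {x y z : V} (h1 : G.Adj x y) (h2 : G.Adj y z) (h3 : G.Adj z x) : False := by
  classical
  have hconn : ConnectedOn G {x, y, z} := by
    refine ⟨⟨x, by simp⟩, ?_⟩
    intro a ha b hb
    by_cases hab : a = b
    · subst hab; exact rw_refl ha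
    · exact rw_adj (tri_adj h1 h2 h3 ha hb hab) ha hb
  have hnocut : NoCutVertexOn G {x, y, z} := by
    intro v hv a ha b hb
    by_cases hab : a = b
    · subst hab; exact rw_refl ha
    · exact rw_adj (tri_adj h1 h2 h3 ha.1 hb.1 hab) ha hb
  obtain ⟨B, hSB, hblock⟩ := exists_block G hconn hnocut
  have hcf := (hB B hblock).1
  have hx : x ∈ B := hSB (by simp)
  have hy : y ∈ B := hSB (by simp)
  have hz : z ∈ B := hSB (by simp)
  refine hcf {⟨x, hx⟩, ⟨y, hy⟩, ⟨z, hz⟩} ⟨?_, ?_⟩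
  · intro a ha b hb hab
    simp only [Finset.coe_insert, Set.mem_insert_iff, Finset.coe_singleton,
      Set.mem_singleton_iff] at ha hb
    have : G.Adj a.1 b.1 := by
      refine tri_adj h1 h2 h3 ?_ ?_ (fun h => hab (Subtype.ext h))
      · rcases ha with rfl | rfl | rfl <;> simp
      · rcases hb with rfl | rfl | rfl <;> simp
    exact this
  · rw [Finset.card_insert_of_notMem, Finset.card_insert_of_notMem, Finset.card_singleton]
    · simp [Subtype.ext_iff, h2.ne]
    · simp [Subtype.ext_iff, h1.ne, h3.ne']

lemma connected_deleteEdges_of_cycle (hG : G.Connected) {v : V} {c : G.Walk v v}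
    (hc : c.IsCycle) {e : Sym2 V} (he : e ∈ c.edges) : (G.deleteEdges {e}).Connected := by
  have heE : e ∈ G.edgeSet := c.edges_subset_edgeSet he
  have hnb : ¬ G.IsBridge e := fun hb =>
    (isBridge_iff_mem_and_forall_cycle_notMem heE).mp hb c hc he
  induction e using Sym2.ind with
  | _ u1 u2 =>
    rw [isBridge_iff] at hnb
    push_neg at hnb
    have hreach : (G.deleteEdges {s(u1, u2)}).Reachable u1 u2 := hnb
    have key : ∀ {a b : V}, G.Walk a b → (G.deleteEdges {s(u1, u2)}).Reachable a b := by
      intro a b w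
      induction w with
      | nil => exact Reachable.refl _
      | @cons p q r h w ih =>
        refine Reachable.trans ?_ ih
        by_cases hedge : s(p, q) = s(u1, u2)
        · rcases Sym2.eq_iff.mp hedge with ⟨rfl, rfl⟩ | ⟨rfl, rfl⟩
          · exact hreach
          · exact hreach.symm
        · exact Adj.reachable (by rw [deleteEdges_adj]; exact ⟨h, by simpa using hedge⟩)
    have : Nonempty V := hG.nonempty
    exact ⟨fun a b => (hG.preconnected a b).elim fun w => key w⟩

lemma edges_delete_ncard [Fintype V] (G : SimpleGraph V) {e : Sym2 V} (he : e ∈ G.edgeSet) :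
    (G.deleteEdges {e}).edgeSet.ncard + 1 = G.edgeSet.ncard := by
  rw [edgeSet_deleteEdges]
  exact Set.ncard_diff_singleton_add_one he (Set.toFinite _)

lemma isTree_ncard [Fintype V] {G : SimpleGraph V} (h : G.IsTree) :
    G.edgeSet.ncard + 1 = Fintype.card V := by
  classical
  have inst : Fintype G.edgeSet := (G.edgeSet.toFinite).fintype
  have hcard := h.card_edgeFinset
  rwa [edgeFinset, ← Set.ncard_eq_toFinset_card'] at hcard

lemma card_le_ncard_edges_of_cycle [Fintype V] :
    ∀ (m : ℕ) (G : SimpleGraph V), G.edgeSet.ncard ≤ m → G.Connected →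
      (∃ (v : V) (c : G.Walk v v), c.IsCycle) → Fintype.card V ≤ G.edgeSet.ncard := by
  intro m
  induction m with
  | zero =>
    intro G hle hconn ⟨v, c, hc⟩
    exfalso
    obtain ⟨e, he⟩ : ∃ e, e ∈ c.edges := by
      cases c with
      | nil => exact absurd hc (by simp [Walk.isCycle_def])
      | @cons a b c h q => exact ⟨s(v, b), by simp⟩
    have : e ∈ G.edgeSet := c.edges_subset_edgeSet he
    have : G.edgeSet.Nonempty := ⟨e, this⟩
    rw [← Set.ncard_pos (Set.toFinite _)] at this
    omega
  | succ m ih =>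
    intro G hle hconn ⟨v, c, hc⟩
    obtain ⟨e, he⟩ : ∃ e, e ∈ c.edges := by
      cases c with
      | nil => exact absurd hc (by simp [Walk.isCycle_def])
      | @cons a b c h q => exact ⟨s(v, b), by simp⟩
    have hconn' := connected_deleteEdges_of_cycle hconn hc he
    have hcard' := edges_delete_ncard G (c.edges_subset_edgeSet he)
    by_cases hac : (G.deleteEdges {e}).IsAcyclic
    · have := isTree_ncard ⟨hconn', hac⟩
      omega
    · simp only [IsAcyclic] at hac
      push_neg at hac
      obtain ⟨w, c', hc'⟩ := hac
      have := ih (G.deleteEdges {e}) (by omega) hconn' ⟨w, c', hc'⟩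
      omega

lemma unique_cycle_edges [Fintype V] (hG : G.Connected)
    (hm : G.edgeSet.ncard = Fintype.card V)
    {v w : V} {c1 : G.Walk v v} {c2 : G.Walk w w} (h1 : c1.IsCycle) (h2 : c2.IsCycle)
    {f : Sym2 V} (hf : f ∈ c1.edges) : f ∈ c2.edges := by
  by_contra hf2
  have hconn' := connected_deleteEdges_of_cycle hG h1 hf
  have hsub : ∀ e ∈ c2.edges, e ∈ (G.deleteEdges {f}).edgeSet := by
    intro e he
    rw [edgeSet_deleteEdges]
    exact ⟨c2.edges_subset_edgeSet he, by rintro rfl; exact hf2 he⟩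
  have hc2' : (c2.transfer (G.deleteEdges {f}) hsub).IsCycle := h2.transfer hsub
  have hge := card_le_ncard_edges_of_cycle (G.deleteEdges {f}).edgeSet.ncard
    (G.deleteEdges {f}) le_rfl hconn' ⟨w, _, hc2'⟩
  have hcard' := edges_delete_ncard G (c1.edges_subset_edgeSet hf)
  omega

end MVDProof3

namespace MVDProof4

open SimpleGraph Walk MVDProof MVDProof2 MVDProof3

variable {G : SimpleGraph V} {τ : V → ℕ}

lemma opp_half (hτ : IsMVDColoring G τ)
    {a b c d : V} (hab : G.Adj a b) (hbc : G.Adj b c) (hcd : G.Adj c d) (hda : G.Adj d a)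
    (hac : a ≠ c) (hnac : ¬ G.Adj a c) : τ b = τ d := by
  obtain ⟨S, ⟨haS, hcS, hcut⟩, hmono⟩ := hτ a c hac hnac
  have hb : b ∈ S := by
    obtain ⟨z, hz, hzS⟩ := hcut (Walk.cons hab (Walk.cons hbc Walk.nil))
    simp only [Walk.support_cons, Walk.support_nil, List.mem_cons, List.not_mem_nil,
      or_false, List.mem_singleton] at hz
    rcases hz with rfl | rfl | rfl
    · exact absurd hzS haS
    · exact hzS
    · exact absurd hzS hcS
  have hd : d ∈ S := by
    obtain ⟨z, hz, hzS⟩ := hcut (Walk.cons hda.symm (Walk.cons hcd.symm Walk.nil))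
    simp only [Walk.support_cons, Walk.support_nil, List.mem_cons, List.not_mem_nil,
      or_false, List.mem_singleton] at hz
    rcases hz with rfl | rfl | rfl
    · exact absurd hzS haS
    · exact hzS
    · exact absurd hzS hcS
  exact hmono b hb d hd

lemma cycle_twin_start (hτ : IsMVDColoring G τ)
    (hT : ∀ {x y z : V}, G.Adj x y → G.Adj y z → G.Adj z x → False)
    {u : V} {c : G.Walk u u} (hc : c.IsCycle) (h5 : 5 ≤ c.length) :
    ∃ z ∈ c.support.tail, z ≠ u ∧ τ z = τ u := by
  cases c with
  | nil => simp at h5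
  | @cons _ p _ h d =>
    cases d with
    | nil => simp [Walk.length_cons] at h5
    | @cons _ p' _ h2 d2 =>
      obtain ⟨x, q, h', hd⟩ := Walk.exists_cons_eq_concat h2 d2
      have hsupp : (Walk.cons h2 d2).support = q.support ++ [u] := by
        rw [hd, Walk.support_concat]
      have htail : (Walk.cons h (Walk.cons h2 d2)).support.tail = q.support ++ [u] := by
        rw [Walk.support_cons, List.tail_cons, hsupp]
      have hnd := hc.2
      rw [htail, List.nodup_append] at hnd
      obtain ⟨hqnd, -, hdisj⟩ := hnd
      have huq : u ∉ q.support := fun hu => hdisj u hu u (by simp) rfl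
      have hlen : q.length + 2 = (Walk.cons h (Walk.cons h2 d2)).length := by
        have := congrArg Walk.length hd
        simp only [Walk.length_cons, Walk.length_concat] at this ⊢
        omega
      have hpx : p ≠ x := by
        rintro rfl
        have : q.IsPath := (Walk.isPath_def q).mpr hqnd
        rw [Walk.isPath_iff_eq_nil] at this
        subst this
        rw [Walk.length_nil] at hlen
        omega
      have hnadj : ¬ G.Adj p x := fun hadj => hT h hadj h'
      obtain ⟨S, ⟨hpS, hxS, hcut⟩, hmono⟩ := hτ p x hpx hnadj
      have huS : u ∈ S := by
        obtain ⟨z, hz, hzS⟩ := hcut (Walk.cons h.symm (Walk.cons h'.symm Walk.nil))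
        simp only [Walk.support_cons, Walk.support_nil, List.mem_cons, List.not_mem_nil,
          or_false, List.mem_singleton] at hz
        rcases hz with rfl | rfl | rfl
        · exact absurd hzS hpS
        · exact hzS
        · exact absurd hzS hxS
      obtain ⟨z, hz, hzS⟩ := hcut q
      refine ⟨z, ?_, ?_, hmono z hzS u huS⟩
      · rw [htail, List.mem_append]; exact Or.inl hz
      · rintro rfl; exact huq hz

lemma cycle_twin (hτ : IsMVDColoring G τ)
    (hT : ∀ {x y z : V}, G.Adj x y → G.Adj y z → G.Adj z x → False)
    {v : V} {c : G.Walk v v} (hc : c.IsCycle) (h5 : 5 ≤ c.length)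
    {u : V} (hu : u ∈ c.support) :
    ∃ z ∈ c.support, z ≠ u ∧ τ z = τ u := by
  classical
  have hc' : (c.rotate u hu).IsCycle := hc.rotate hu
  have hlen : (c.rotate u hu).length = c.length := by
    have := (Walk.rotate_edges c u hu).perm.length_eq
    rwa [Walk.length_edges, Walk.length_edges] at this
  obtain ⟨z, hz, hzu, hτz⟩ := cycle_twin_start hτ hT hc' (by omega)
  have hz' : z ∈ c.support.tail := (Walk.support_rotate c u hu).mem_iff.mp hz
  exact ⟨z, List.mem_of_mem_tail hz', hzu, hτz⟩

lemma long_cycle_bound [Fintype V] (hτ : IsMVDColoring G τ)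
    (hT : ∀ {x y z : V}, G.Adj x y → G.Adj y z → G.Adj z x → False)
    {v : V} {c : G.Walk v v} (hc : c.IsCycle) (h5 : 5 ≤ c.length) :
    (Set.range τ).ncard ≤ Fintype.card V - 3 := by
  classical
  have hnil : ¬ c.Nil := by
    intro hn
    rw [Walk.nil_iff_length_eq] at hn
    omega
  have hnd := hc.2
  have hcard : c.support.tail.toFinset.card = c.length := by
    rw [List.toFinset_card_of_nodup hnd, List.length_tail, Walk.length_support]
    omega
  apply range_ncard_le_sub3 τ c.support.tail.toFinset (by omega)
  intro u hu
  obtain ⟨z, hz, hzu, hτz⟩ :=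
    cycle_twin hτ hT hc h5 (List.mem_of_mem_tail (List.mem_toFinset.mp hu))
  refine ⟨z, ?_, hzu, hτz⟩
  rw [List.mem_toFinset]
  exact mem_tail_of_mem_support_closed c hnil hz

lemma merge3_core [Fintype V] (τ : V → ℕ) {a b c d e g : V}
    (hac : a ≠ c) (had : a ≠ d) (hbc : b ≠ c) (hbd : b ≠ d) (hcd : c ≠ d)
    (heg : e ≠ g) (hga : g ≠ a) (hgb : g ≠ b) (hgc : g ≠ c) (hgd : g ≠ d)
    (h1 : τ a = τ c) (h2 : τ b = τ d) (h3 : τ e = τ g) :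
    (Set.range τ).ncard ≤ Fintype.card V - 3 := by
  classical
  have hD : ({c, d, g} : Finset V).card = 3 := by
    rw [Finset.card_insert_of_notMem (by simp [hcd, hgc.symm]),
      Finset.card_insert_of_notMem (by simp [hgd.symm]),
      Finset.card_singleton]
  have hcover : ∀ v ∈ ({c, d, g} : Finset V), ∃ w, w ∉ ({c, d, g} : Finset V) ∧ τ w = τ v := by
    intro v hv
    simp only [Finset.mem_insert, Finset.mem_singleton] at hv
    rcases hv with rfl | rfl | rfl
    · exact ⟨a, by simp [hac, had, hga.symm], h1⟩
    · exact ⟨b, by simp [hbc, hbd, hgb.symm], h2⟩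
    · by_cases hec : e = c
      · subst hec
        exact ⟨a, by simp [hac, had, hga.symm], h1.trans h3⟩
      · by_cases hed : e = d
        · subst hed
          exact ⟨b, by simp [hbc, hbd, hgb.symm], h2.trans h3⟩
        · exact ⟨e, by simp [hec, hed, heg], h3⟩
  have := range_ncard_le_compl τ {c, d, g} hcover
  rwa [hD] at this

lemma merge3_bound [Fintype V] (τ : V → ℕ) {a b c d e g : V}
    (hab : a ≠ b) (hac : a ≠ c) (had : a ≠ d) (hbc : b ≠ c) (hbd : b ≠ d) (hcd : c ≠ d)
    (heg : e ≠ g)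
    (h1 : τ a = τ c) (h2 : τ b = τ d) (h3 : τ e = τ g)
    (hne1 : ¬((e = a ∧ g = c) ∨ (e = c ∧ g = a)))
    (hne2 : ¬((e = b ∧ g = d) ∨ (e = d ∧ g = b))) :
    (Set.range τ).ncard ≤ Fintype.card V - 3 := by
  classical
  by_cases hgQ : g = a ∨ g = b ∨ g = c ∨ g = d
  · by_cases heQ : e = a ∨ e = b ∨ e = c ∨ e = d
    · -- both endpoints of extra pair in {a,b,c,d}: all four colors coincide
      have hall : τ a = τ b := by
        rcases heQ with rfl | rfl | rfl | rfl
        · rcases hgQ with rfl | rfl | rfl | rfl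
          · exact absurd rfl heg
          · exact h3
          · exact absurd (Or.inl ⟨rfl, rfl⟩) hne1
          · exact h3.trans h2.symm
        · rcases hgQ with rfl | rfl | rfl | rfl
          · exact h3.symm
          · exact absurd rfl heg
          · exact h1.trans h3.symm
          · exact absurd (Or.inl ⟨rfl, rfl⟩) hne2
        · rcases hgQ with rfl | rfl | rfl | rfl
          · exact absurd (Or.inr ⟨rfl, rfl⟩) hne1
          · exact h1.trans h3
          · exact absurd rfl heg
          · exact h1.trans (h3.trans h2.symm)
        · rcases hgQ with rfl | rfl | rfl | rfl
          · exact (h2.trans h3).symm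
          · exact absurd (Or.inr ⟨rfl, rfl⟩) hne2
          · exact h1.trans (h3.symm.trans h2.symm)
          · exact absurd rfl heg
      have hD : ({b, c, d} : Finset V).card = 3 := by
        rw [Finset.card_insert_of_notMem (by simp [hbc, hbd]),
          Finset.card_insert_of_notMem (by simp [hcd]), Finset.card_singleton]
      have hcover : ∀ v ∈ ({b, c, d} : Finset V),
          ∃ w, w ∉ ({b, c, d} : Finset V) ∧ τ w = τ v := by
        intro v hv
        simp only [Finset.mem_insert, Finset.mem_singleton] at hv
        rcases hv with rfl | rfl | rfl
        · exact ⟨a, by simp [hab, hac, had], hall⟩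
        · exact ⟨a, by simp [hab, hac, had], h1⟩
        · exact ⟨a, by simp [hab, hac, had], hall.trans h2⟩
      have := range_ncard_le_compl τ {b, c, d} hcover
      rwa [hD] at this
    · push_neg at heQ
      obtain ⟨hea, heb, hec, hed⟩ := heQ
      exact merge3_core τ hac had hbc hbd hcd heg.symm hea heb hec hed h1 h2 h3.symm
  · push_neg at hgQ
    obtain ⟨hga, hgb, hgc, hgd⟩ := hgQ
    exact merge3_core τ hac had hbc hbd hcd heg hga hgb hgc hgd h1 h2 h3

lemma edge_mem_cross {v b c d w f g h : V}
    (H : (w = v ∧ g = c) ∨ (w = c ∧ g = v)) (F : (f = b ∧ h = d) ∨ (f = d ∧ h = b))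
    {f0 : Sym2 V}
    (hin : f0 = s(v, b) ∨ f0 = s(b, c) ∨ f0 = s(c, d) ∨ f0 = s(d, v)) :
    f0 = s(w, f) ∨ f0 = s(f, g) ∨ f0 = s(g, h) ∨ f0 = s(h, w) := by
  rcases H with ⟨rfl, rfl⟩ | ⟨rfl, rfl⟩ <;> rcases F with ⟨rfl, rfl⟩ | ⟨rfl, rfl⟩ <;>
    rcases hin with rfl | rfl | rfl | rfl <;> (simp only [Sym2.eq_iff]; tauto)

lemma edge_mem_cross' {v b c d w f g h : V}
    (H : (w = b ∧ g = d) ∨ (w = d ∧ g = b)) (F : (f = v ∧ h = c) ∨ (f = c ∧ h = v))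
    {f0 : Sym2 V}
    (hin : f0 = s(v, b) ∨ f0 = s(b, c) ∨ f0 = s(c, d) ∨ f0 = s(d, v)) :
    f0 = s(w, f) ∨ f0 = s(f, g) ∨ f0 = s(g, h) ∨ f0 = s(h, w) := by
  rcases H with ⟨rfl, rfl⟩ | ⟨rfl, rfl⟩ <;> rcases F with ⟨rfl, rfl⟩ | ⟨rfl, rfl⟩ <;>
    rcases hin with rfl | rfl | rfl | rfl <;> (simp only [Sym2.eq_iff]; tauto)

end MVDProof4

namespace MVDProof5

open SimpleGraph Walk MVDProof MVDProof2 MVDProof3 MVDProof4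

variable {G : SimpleGraph V} {τ : V → ℕ}

lemma cut_symm {x y : V} {S : Set V} (h : IsCutBetween G x y S) : IsCutBetween G y x S :=
  ⟨h.2.1, h.1, fun p => by
    obtain ⟨z, hz, hzS⟩ := h.2.2 p.reverse
    rw [Walk.support_reverse, List.mem_reverse] at hz
    exact ⟨z, hz, hzS⟩⟩

lemma two_cycles_mvd_bound [Fintype V] (hτ : IsMVDColoring G τ)
    (hT : ∀ {x y z : V}, G.Adj x y → G.Adj y z → G.Adj z x → False)
    {v w : V} {c1 : G.Walk v v} {c2 : G.Walk w w}
    (hc1 : c1.IsCycle) (hc2 : c2.IsCycle) (hl1 : c1.length = 4) (hl2 : c2.length = 4)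
    (hne : ∃ f0 ∈ c1.edges, f0 ∉ c2.edges) :
    (Set.range τ).ncard ≤ Fintype.card V - 3 := by
  obtain ⟨b, c, d, h1, h2, h3, h4, rfl⟩ := walk_length4_decomp c1 hl1
  obtain ⟨f, g, h, k1, k2, k3, k4, rfl⟩ := walk_length4_decomp c2 hl2
  obtain ⟨hvb, hvc, hvd, hbc, hbd, hcd⟩ := cycle4_distinct hc1
  obtain ⟨hwf, hwg, hwh, hfg, hfh, hgh⟩ := cycle4_distinct hc2
  have hnvc : ¬ G.Adj v c := fun hadj => hT h1 h2 hadj.symm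
  have hnbd : ¬ G.Adj b d := fun hadj => hT h2 h3 hadj.symm
  have hnwg : ¬ G.Adj w g := fun hadj => hT k1 k2 hadj.symm
  have hnfh : ¬ G.Adj f h := fun hadj => hT k2 k3 hadj.symm
  have e1 : τ b = τ d := opp_half hτ h1 h2 h3 h4 hvc hnvc
  have e2 : τ c = τ v := opp_half hτ h2 h3 h4 h1 hbd hnbd
  have e3 : τ f = τ h := opp_half hτ k1 k2 k3 k4 hwg hnwg
  have e4 : τ g = τ w := opp_half hτ k2 k3 k4 k1 hfh hnfh
  obtain ⟨f0, hf0in, hf0out⟩ := hne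
  simp only [Walk.edges_cons, Walk.edges_nil, List.mem_cons, List.not_mem_nil, or_false]
    at hf0in hf0out
  by_cases H1 : (w = v ∧ g = c) ∨ (w = c ∧ g = v)
  · by_cases F2 : (f = b ∧ h = d) ∨ (f = d ∧ h = b)
    · exact absurd (edge_mem_cross H1 F2 hf0in) hf0out
    · have F1 : ¬((f = v ∧ h = c) ∨ (f = c ∧ h = v)) := by
        rcases H1 with ⟨hwv, hgc⟩ | ⟨hwc, hgv⟩ <;> rintro (⟨hf', -⟩ | ⟨hf', -⟩)
        · exact hwf (hwv.trans hf'.symm)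
        · exact hfg (hf'.trans hgc.symm)
        · exact hfg (hf'.trans hgv.symm)
        · exact hwf (hwc.trans hf'.symm)
      exact merge3_bound τ hvb hvc hvd hbc hbd hcd hfh e2.symm e1 e3 F1 F2
  · by_cases H2 : (w = b ∧ g = d) ∨ (w = d ∧ g = b)
    · by_cases F1 : (f = v ∧ h = c) ∨ (f = c ∧ h = v)
      · exact absurd (edge_mem_cross' H2 F1 hf0in) hf0out
      · have F2 : ¬((f = b ∧ h = d) ∨ (f = d ∧ h = b)) := by
          rcases H2 with ⟨hwb, hgd⟩ | ⟨hwd, hgb⟩ <;> rintro (⟨hf', -⟩ | ⟨hf', -⟩)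
          · exact hwf (hwb.trans hf'.symm)
          · exact hfg (hf'.trans hgd.symm)
          · exact hfg (hf'.trans hgb.symm)
          · exact hwf (hwd.trans hf'.symm)
        exact merge3_bound τ hvb hvc hvd hbc hbd hcd hfh e2.symm e1 e3 F1 F2
    · exact merge3_bound τ hvb hvc hvd hbc hbd hcd hwg e2.symm e1 e4.symm H1 H2

lemma hard_direction [Fintype V] (G : SimpleGraph V) (hG : G.Connected)
    (hT : ∀ {x y z : V}, G.Adj x y → G.Adj y z → G.Adj z x → False)
    (hmvd : mvd G = Fintype.card V - 2) :
    G.edgeSet.ncard = Fintype.card V ∧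
      ∀ (v : V) (c : G.Walk v v), c.IsCycle → c.length = 4 := by
  classical
  have hVne : Nonempty V := hG.nonempty
  have hn1 : 1 ≤ Fintype.card V := Fintype.card_pos
  -- Step 1: G has a cycle
  have hcyc : ¬ G.IsAcyclic := by
    intro hac
    have hall : ∀ τ : V → ℕ, IsMVDColoring G τ := by
      intro τ x y hxy hnadj
      obtain ⟨p0w⟩ := hG.preconnected x y
      have hp0path : p0w.bypass.IsPath := p0w.bypass_isPath
      obtain ⟨u, hu, q, hq⟩ := walk_cons_of_ne p0w.bypass hxy
      have huy : u ≠ y := by rintro rfl; exact hnadj hu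
      refine ⟨{u}, ⟨?_, ?_, ?_⟩, ?_⟩
      · intro hmem; exact hu.ne (Set.mem_singleton_iff.mp hmem)
      · intro hmem; exact huy (Set.mem_singleton_iff.mp hmem).symm
      · intro p
        have hbp : p.bypass = p0w.bypass := by
          have heq : (⟨p.bypass, p.bypass_isPath⟩ : G.Path x y) = ⟨p0w.bypass, hp0path⟩ :=
            hac.path_unique _ _
          exact congrArg Subtype.val heq
        refine ⟨u, ?_, rfl⟩
        have hu' : u ∈ p0w.bypass.support := by rw [hq]; simp
        exact p.support_bypass_subset (hbp ▸ hu')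
      · intro p hp q' hq'
        rw [Set.mem_singleton_iff] at hp hq'; rw [hp, hq']
    have hι : Function.Injective (fun v => ((Fintype.equivFin V) v : ℕ)) :=
      fun p q hpq => (Fintype.equivFin V).injective (Fin.val_injective hpq)
    have hmem := le_mvd_of_mem (G := G) ⟨_, hall _, by
      rw [← Set.image_univ, Set.ncard_image_of_injective _ hι, Set.ncard_univ,
        Nat.card_eq_fintype_card]⟩
    rw [hmvd] at hmem
    omega
  simp only [IsAcyclic] at hcyc; push_neg at hcyc
  obtain ⟨v0, c0, hc0⟩ := hcyc
  -- Step 2: all cycles have length 4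
  have hlen4 : ∀ (v : V) (c : G.Walk v v), c.IsCycle → c.length = 4 := by
    intro v c hc
    have h3 := hc.three_le_length
    have hnV : c.length ≤ Fintype.card V := by
      have hnd := hc.2
      have hlt := hnd.length_le_card
      rw [List.length_tail, Walk.length_support] at hlt
      omega
    by_cases h5 : 5 ≤ c.length
    · exfalso
      have hb : mvd G ≤ Fintype.card V - 3 :=
        mvd_le_of_forall (fun τ hτ => long_cycle_bound hτ hT hc h5)
      omega
    · rcases (by omega : c.length = 3 ∨ c.length = 4) with h3' | h4
      · obtain ⟨b, c', hadj1, hadj2, hadj3, -⟩ := walk_length3_decomp c h3'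
        exact (hT hadj1 hadj2 hadj3).elim
      · exact h4
  -- Step 3: edge count
  have hl0 : c0.length = 4 := hlen4 _ _ hc0
  have hn4 : 4 ≤ Fintype.card V := by
    have hnd := hc0.2
    have hlt := hnd.length_le_card
    rw [List.length_tail, Walk.length_support] at hlt
    omega
  obtain ⟨e0, he0⟩ : ∃ e, e ∈ c0.edges := by
    cases c0 with
    | nil => exact absurd hc0 (by simp [Walk.isCycle_def])
    | @cons a b c h q => exact ⟨s(v0, b), by simp⟩
  have hconn' := connected_deleteEdges_of_cycle hG hc0 he0
  have hac' : (G.deleteEdges {e0}).IsAcyclic := by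
    intro w c' hc'
    have hsub : ∀ e ∈ c'.edges, e ∈ G.edgeSet := by
      intro e he
      have := c'.edges_subset_edgeSet he
      rw [edgeSet_deleteEdges] at this
      exact this.1
    have hc2 : (c'.transfer G hsub).IsCycle := hc'.transfer hsub
    have he0not : e0 ∉ (c'.transfer G hsub).edges := by
      rw [Walk.edges_transfer]
      intro hmem
      have := c'.edges_subset_edgeSet hmem
      rw [edgeSet_deleteEdges] at this
      exact this.2 rfl
    have hb : mvd G ≤ Fintype.card V - 3 :=
      mvd_le_of_forall (fun τ hτ =>
        two_cycles_mvd_bound hτ hT hc0 hc2 hl0 (hlen4 _ _ hc2) ⟨e0, he0, he0not⟩)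
    omega
  have htree := isTree_ncard ⟨hconn', hac'⟩
  have hdel := edges_delete_ncard G (c0.edges_subset_edgeSet he0)
  exact ⟨by omega, hlen4⟩

end MVDProof5

namespace MVDProof6

open SimpleGraph Walk MVDProof MVDProof2 MVDProof3 MVDProof4 MVDProof5

variable {G : SimpleGraph V}

lemma easy_direction [Fintype V] (G : SimpleGraph V) (hG : G.Connected)
    (hm : G.edgeSet.ncard = Fintype.card V)
    (h4cyc : ∀ (v : V) (c : G.Walk v v), c.IsCycle → c.length = 4) :
    mvd G = Fintype.card V - 2 := by
  classical
  have hVne : Nonempty V := hG.nonempty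
  have hn1 : 1 ≤ Fintype.card V := Fintype.card_pos
  -- no triangles
  have hT : ∀ {x y z : V}, G.Adj x y → G.Adj y z → G.Adj z x → False := by
    intro x y z p1 p2 p3
    have hlen := h4cyc x _ (triangle_isCycle p1 p2 p3)
    simp [Walk.length_cons] at hlen
  -- a cycle exists
  have hcyc : ¬ G.IsAcyclic := by
    intro hac
    have := isTree_ncard ⟨hG, hac⟩
    omega
  simp only [IsAcyclic] at hcyc; push_neg at hcyc
  obtain ⟨a, c0, hc0⟩ := hcyc
  obtain ⟨b, c, d, h1, h2, h3, h4, rfl⟩ := walk_length4_decomp c0 (h4cyc _ _ hc0)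
  obtain ⟨hab, hac, had, hbc, hbd, hcd⟩ := cycle4_distinct hc0
  have hnac : ¬ G.Adj a c := fun hadj => hT h1 h2 hadj.symm
  have hnbd : ¬ G.Adj b d := fun hadj => hT h2 h3 hadj.symm
  -- every cycle passes only through {a, b, c, d}
  have hQ : ∀ ⦃z : V⦄ (c' : G.Walk z z), c'.IsCycle → ∀ x ∈ c'.support,
      x = a ∨ x = b ∨ x = c ∨ x = d := by
    intro z c' hc' x hx
    have hnil : ¬ c'.Nil := by
      rw [Walk.nil_iff_length_eq]
      have := hc'.three_le_length; omega
    obtain ⟨e, he, hxe⟩ := cycle_support_mem_edge c' hnil hx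
    have he0 := unique_cycle_edges hG hm hc' hc0 he
    simp only [Walk.edges_cons, Walk.edges_nil, List.mem_cons, List.not_mem_nil, or_false]
      at he0
    rcases he0 with rfl | rfl | rfl | rfl <;>
      (rcases Sym2.mem_iff.mp hxe with rfl | rfl <;> tauto)
  -- second-vertex lemma for vertices off the cycle
  have hsecond : ∀ {x y : V}, ¬(x = a ∨ x = b ∨ x = c ∨ x = d) → x ≠ y → ¬ G.Adj x y →
      ∃ u, u ≠ x ∧ u ≠ y ∧ ∀ (w : G.Walk x y), u ∈ w.support := by
    intro x y hxQ hxy hnadj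
    obtain ⟨p0w⟩ := hG.preconnected x y
    have hp0path : p0w.bypass.IsPath := p0w.bypass_isPath
    obtain ⟨u, hxu, q, hq⟩ := walk_cons_of_ne p0w.bypass hxy
    have hqfacts : q.IsPath ∧ x ∉ q.support := by
      have hh := hp0path; rw [hq, Walk.cons_isPath_iff] at hh; exact hh
    have huy : u ≠ y := by rintro rfl; exact hnadj hxu
    refine ⟨u, hxu.ne', huy, ?_⟩
    intro w
    obtain ⟨u', hxu', q', hq'⟩ := walk_cons_of_ne w.bypass hxy
    have hq'facts : q'.IsPath ∧ x ∉ q'.support := by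
      have hh := w.bypass_isPath; rw [hq', Walk.cons_isPath_iff] at hh; exact hh
    have huu' : u' = u := by
      by_contra hneu
      have hxm : x ∉ (q.append q'.reverse).support := by
        intro hxmem
        rcases (Walk.mem_support_append_iff _ _).mp hxmem with hmem | hmem
        · exact hqfacts.2 hmem
        · rw [Walk.support_reverse, List.mem_reverse] at hmem
          exact hq'facts.2 hmem
      have hxm' : x ∉ (q.append q'.reverse).bypass.support :=
        fun hmem => hxm ((q.append q'.reverse).support_bypass_subset hmem)
      have hcycle := cons_concat_isCycle hxu (q.append q'.reverse).bypass hxu'.symm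
        ((q.append q'.reverse).bypass_isPath) hxm' (fun hh => hneu hh.symm)
      exact hxQ (hQ _ hcycle x (by simp))
    have hu'mem : u' ∈ w.bypass.support := by rw [hq']; simp
    have := w.support_bypass_subset hu'mem
    rwa [huu'] at this
  -- the optimal coloring
  set ι : V → ℕ := fun v => ((Fintype.equivFin V) v : ℕ) with hιdef
  have hι : Function.Injective ι :=
    fun p q hpq => (Fintype.equivFin V).injective (Fin.val_injective hpq)
  set τ0 : V → ℕ := fun v => ι (if v = c then a else if v = d then b else v) with hτ0def
  have hτ0c : τ0 c = ι a := by simp [hτ0def]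
  have hτ0d : τ0 d = ι b := by simp [hτ0def, hcd.symm]
  have hτ0a : τ0 a = ι a := by simp [hτ0def, hac, had]
  have hτ0b : τ0 b = ι b := by simp [hτ0def, hbc, hbd]
  have hτ0other : ∀ v, v ≠ c → v ≠ d → τ0 v = ι v := by
    intro v hvc hvd; simp [hτ0def, hvc, hvd]
  have hrange : Set.range τ0 = ι '' (Set.univ \ {c, d}) := by
    apply Set.Subset.antisymm
    · rintro _ ⟨v, rfl⟩
      by_cases hvc : v = c
      · exact ⟨a, ⟨trivial, by simp [hac, had]⟩, by rw [hvc, hτ0c]⟩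
      · by_cases hvd : v = d
        · exact ⟨b, ⟨trivial, by simp [hbc, hbd]⟩, by rw [hvd, hτ0d]⟩
        · exact ⟨v, ⟨trivial, by simp [hvc, hvd]⟩, (hτ0other v hvc hvd).symm⟩
    · rintro _ ⟨v, ⟨-, hv⟩, rfl⟩
      simp only [Set.mem_insert_iff, Set.mem_singleton_iff, not_or] at hv
      exact ⟨v, (hτ0other v hv.1 hv.2)⟩
  have hncard : (Set.range τ0).ncard = Fintype.card V - 2 := by
    rw [hrange, Set.ncard_image_of_injective _ hι,
      Set.ncard_diff (Set.subset_univ _), Set.ncard_univ, Nat.card_eq_fintype_card,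
      Set.ncard_pair hcd]
  -- monochromatic pairs
  have hmbd : Monochromatic τ0 {b, d} := by
    intro p hp q hq
    rcases hp with rfl | hp <;> rcases hq with rfl | hq
    · rfl
    · rw [Set.mem_singleton_iff] at hq; rw [hq, hτ0b, hτ0d]
    · rw [Set.mem_singleton_iff] at hp; rw [hp, hτ0b, hτ0d]
    · rw [Set.mem_singleton_iff] at hp hq; rw [hp, hq]
  have hmac : Monochromatic τ0 {a, c} := by
    intro p hp q hq
    rcases hp with rfl | hp <;> rcases hq with rfl | hq
    · rfl
    · rw [Set.mem_singleton_iff] at hq; rw [hq, hτ0a, hτ0c]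
    · rw [Set.mem_singleton_iff] at hp; rw [hp, hτ0a, hτ0c]
    · rw [Set.mem_singleton_iff] at hp hq; rw [hp, hq]
  -- the two cross cuts
  have cutac : IsCutBetween G a c {b, d} := by
    refine ⟨?_, ?_, ?_⟩
    · simp only [Set.mem_insert_iff, Set.mem_singleton_iff]
      rintro (rfl | rfl)
      · exact hab rfl
      · exact had rfl
    · simp only [Set.mem_insert_iff, Set.mem_singleton_iff]
      rintro (rfl | rfl)
      · exact hbc rfl
      · exact hcd rfl
    · intro p
      by_contra hnone
      push_neg at hnone
      have hbq : b ∉ p.bypass.support :=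
        fun hmem => hnone b (p.support_bypass_subset hmem) (by simp)
      have hdq : d ∉ p.bypass.support :=
        fun hmem => hnone d (p.support_bypass_subset hmem) (by simp)
      obtain ⟨r, har, q1, hq1⟩ := walk_cons_of_ne p.bypass hac
      have hq1facts : q1.IsPath ∧ a ∉ q1.support := by
        have hh := p.bypass_isPath; rw [hq1, Walk.cons_isPath_iff] at hh; exact hh
      have hcycle := cons_concat_isCycle h1.symm p.bypass h2.symm p.bypass_isPath hbq hac
      have hrQ := hQ _ hcycle r (by
        rw [Walk.support_cons, Walk.support_concat, hq1,
          Walk.support_cons]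
        exact List.mem_cons_of_mem _ (List.mem_cons_of_mem _
          (List.mem_append_left _ q1.start_mem_support)))
      have hra : r ≠ a := fun hh => hq1facts.2 (hh ▸ q1.start_mem_support)
      have hrb : r ≠ b := fun hh => hbq (by rw [hq1]; right; exact hh ▸ q1.start_mem_support)
      have hrd : r ≠ d := fun hh => hdq (by rw [hq1]; right; exact hh ▸ q1.start_mem_support)
      have hrc : r = c := by tauto
      subst hrc
      have : q1.IsPath := hq1facts.1
      rw [Walk.isPath_iff_eq_nil] at this
      subst this
      exact hnac har
  have cutbd : IsCutBetween G b d {a, c} := by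
    refine ⟨?_, ?_, ?_⟩
    · simp only [Set.mem_insert_iff, Set.mem_singleton_iff]
      rintro (rfl | rfl)
      · exact hab rfl
      · exact hbc rfl
    · simp only [Set.mem_insert_iff, Set.mem_singleton_iff]
      rintro (rfl | rfl)
      · exact had rfl
      · exact hcd rfl
    · intro p
      by_contra hnone
      push_neg at hnone
      have haq : a ∉ p.bypass.support :=
        fun hmem => hnone a (p.support_bypass_subset hmem) (by simp)
      have hcq : c ∉ p.bypass.support :=
        fun hmem => hnone c (p.support_bypass_subset hmem) (by simp)
      obtain ⟨r, hbr, q1, hq1⟩ := walk_cons_of_ne p.bypass hbd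
      have hq1facts : q1.IsPath ∧ b ∉ q1.support := by
        have hh := p.bypass_isPath; rw [hq1, Walk.cons_isPath_iff] at hh; exact hh
      have hcycle := cons_concat_isCycle h1 p.bypass h4 p.bypass_isPath haq hbd
      have hrQ := hQ _ hcycle r (by
        rw [Walk.support_cons, Walk.support_concat, hq1,
          Walk.support_cons]
        exact List.mem_cons_of_mem _ (List.mem_cons_of_mem _
          (List.mem_append_left _ q1.start_mem_support)))
      have hrb : r ≠ b := fun hh => hq1facts.2 (hh ▸ q1.start_mem_support)
      have hra : r ≠ a := fun hh => haq (by rw [hq1]; right; exact hh ▸ q1.start_mem_support)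
      have hrc : r ≠ c := fun hh => hcq (by rw [hq1]; right; exact hh ▸ q1.start_mem_support)
      have hrd : r = d := by tauto
      subst hrd
      have : q1.IsPath := hq1facts.1
      rw [Walk.isPath_iff_eq_nil] at this
      subst this
      exact hnbd hbr
  -- τ0 is an MVD coloring
  have hmvdc : IsMVDColoring G τ0 := by
    intro x y hxy hnadj
    by_cases hxQ : x = a ∨ x = b ∨ x = c ∨ x = d
    · by_cases hyQ : y = a ∨ y = b ∨ y = c ∨ y = d
      · rcases hxQ with rfl | rfl | rfl | rfl <;> rcases hyQ with rfl | rfl | rfl | rfl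
        · exact absurd rfl hxy
        · exact absurd h1 hnadj
        · exact ⟨{b, d}, cutac, hmbd⟩
        · exact absurd h4.symm hnadj
        · exact absurd h1.symm hnadj
        · exact absurd rfl hxy
        · exact absurd h2 hnadj
        · exact ⟨{a, c}, cutbd, hmac⟩
        · exact ⟨{b, d}, cut_symm cutac, hmbd⟩
        · exact absurd h2.symm hnadj
        · exact absurd rfl hxy
        · exact absurd h3 hnadj
        · exact absurd h4 hnadj
        · exact ⟨{a, c}, cut_symm cutbd, hmac⟩
        · exact absurd h3.symm hnadj
        · exact absurd rfl hxy
      · obtain ⟨u, huy, hux, hall⟩ := hsecond hyQ (Ne.symm hxy) (fun hh => hnadj hh.symm)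
        refine ⟨{u}, ⟨?_, ?_, ?_⟩, ?_⟩
        · intro hmem; exact hux (Set.mem_singleton_iff.mp hmem).symm
        · intro hmem; exact huy (Set.mem_singleton_iff.mp hmem).symm
        · intro p
          have := hall p.reverse
          exact ⟨u, by rwa [Walk.support_reverse, List.mem_reverse] at this, rfl⟩
        · intro p hp q hq
          rw [Set.mem_singleton_iff] at hp hq; rw [hp, hq]
    · obtain ⟨u, hux, huy, hall⟩ := hsecond hxQ hxy hnadj
      refine ⟨{u}, ⟨?_, ?_, fun p => ⟨u, hall p, rfl⟩⟩, ?_⟩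
      · intro hmem; exact hux (Set.mem_singleton_iff.mp hmem).symm
      · intro hmem; exact huy (Set.mem_singleton_iff.mp hmem).symm
      · intro p hp q hq
        rw [Set.mem_singleton_iff] at hp hq; rw [hp, hq]
  -- conclude
  apply le_antisymm
  · apply mvd_le_of_forall
    intro τ hτ
    have m1 : τ b = τ d := opp_half hτ h1 h2 h3 h4 hac hnac
    have m2 : τ c = τ a := opp_half hτ h2 h3 h4 h1 hbd hnbd
    have hD : ({c, d} : Finset V).card = 2 := by
      rw [Finset.card_insert_of_notMem (by simp [hcd]), Finset.card_singleton]
    have hcover : ∀ v ∈ ({c, d} : Finset V), ∃ w, w ∉ ({c, d} : Finset V) ∧ τ w = τ v := by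
      intro v hv
      simp only [Finset.mem_insert, Finset.mem_singleton] at hv
      rcases hv with rfl | rfl
      · exact ⟨a, by simp [hac, had], m2.symm⟩
      · exact ⟨b, by simp [hbc, hbd], m1⟩
    have := range_ncard_le_compl τ {c, d} hcover
    rwa [hD] at this
  · exact le_mvd_of_mem ⟨τ0, hmvdc, hncard⟩

end MVDProof6

/-- For a connected graph whose blocks are all trivial or minimally 2-connected
triangle-free, `mvd(G) = n - 2` iff `G` is unicyclic with its unique cycle `C₄`. -/
theorem stmt13 {V : Type*} [Fintype V] (G : SimpleGraph V) (hG : G.Connected)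
    (hB : ∀ C : Set V, IsBlock G C →
      ((G.induce C).CliqueFree 3 ∧
        (C.ncard ≤ 2 ∨ MinimallyTwoConnected (G.induce C)))) :
    mvd G = Fintype.card V - 2 ↔
      (Nat.card G.edgeSet = Fintype.card V ∧
        ∀ (v : V) (c : G.Walk v v), c.IsCycle → c.length = 4) := by
    classical
  have hT : ∀ {x y z : V}, G.Adj x y → G.Adj y z → G.Adj z x → False :=
    fun h1 h2 h3 => MVDProof3.no_triangle G hB h1 h2 h3
  rw [Nat.card_coe_set_eq]
  constructor
  · intro h
    exact MVDProof5.hard_direction G hG hT h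
  · rintro ⟨hm, h4⟩
    exact MVDProof6.easy_direction G hG hm h4
end

section
/- Let G be a 2-connected graph with ear decomposition G_0, ..., G_t where the last ear P_{t-1} has at least one internal vertex, and let C be a cycle formed by P_{t-1} together with a shortest path in G_{t-1} between the endpoints of P_{t-1}, with |C| ≥ 4. If τ is an MVD-coloring of G, then every color used by τ on the internal vertices of P_{t-1} but not used on G_{t-1} colors at least two internal vertices of P_{t-1}; consequently |τ(G)| − |τ(G_{t-1})| ≤ ⌊(|P_{t-1}| − 2)/2⌋. -/
open SimpleGraph

variable {V : Type*}

private lemma loop_path_length {V : Type*} {G : SimpleGraph V} {x : V} {P : G.Walk x x}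
    (hP : P.IsPath) : P.length = 0 := by
  cases P with
  | nil => rfl
  | cons h Q =>
    rw [SimpleGraph.Walk.cons_isPath_iff] at hP
    exact absurd Q.end_mem_support hP.2

private lemma getVert_one_end {V : Type*} {G : SimpleGraph V} {x y : V} {P : G.Walk x y}
    (hP : P.IsPath) (h1 : P.getVert 1 = y) (hn : ¬ P.Nil) : P.length = 1 := by
  cases P with
  | nil => exact absurd SimpleGraph.Walk.Nil.nil hn
  | @cons _ z _ h Q =>
    rw [SimpleGraph.Walk.getVert_cons_succ, SimpleGraph.Walk.getVert_zero] at h1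
    subst h1
    rw [SimpleGraph.Walk.cons_isPath_iff] at hP
    rw [SimpleGraph.Walk.length_cons, loop_path_length hP.1]

/-- In an MVD-coloring of a 2-connected graph `G = G_{t-1} ∪ P_{t-1}`, every new
color on the internal vertices of the last ear colors at least two of them, so
at most `⌊(|P_{t-1}|-2)/2⌋` new colors appear. -/
theorem stmt16 {V : Type*} [Fintype V] (G : SimpleGraph V) (h2 : TwoConnected G)
    (H : G.Subgraph) (u v : V) (p : G.Walk u v) (hp : p.IsPath) (hlen : 2 ≤ p.length)
    (hu : u ∈ H.verts) (hv : v ∈ H.verts)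
    (hint : ∀ w ∈ p.support, w = u ∨ w = v ∨ w ∉ H.verts)
    (htop : H ⊔ p.toSubgraph = ⊤)
    (q : G.Walk u v) (hq : q.IsPath) (hqH : ∀ w ∈ q.support, w ∈ H.verts)
    (hqmin : ∀ q' : G.Walk u v, (∀ w ∈ q'.support, w ∈ H.verts) → q.length ≤ q'.length)
    (hC : 4 ≤ p.length + q.length)
    (τ : V → ℕ) (hτ : IsMVDColoring G τ) :
    (∀ c : ℕ, (∃ w ∈ p.support, w ≠ u ∧ w ≠ v ∧ τ w = c) → c ∉ τ '' H.verts →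
      2 ≤ {w : V | w ∈ p.support ∧ w ≠ u ∧ w ≠ v ∧ τ w = c}.ncard) ∧
    (Set.range τ).ncard - (τ '' H.verts).ncard ≤ (p.length + 1 - 2) / 2 := by
  classical
  have hcover : ∀ x : V, x ∈ H.verts ∨ x ∈ p.support := by
    intro x
    have hx : x ∈ (H ⊔ p.toSubgraph).verts := by rw [htop]; trivial
    rw [Subgraph.verts_sup] at hx
    rcases hx with h | h
    · exact Or.inl h
    · exact Or.inr ((Walk.mem_verts_toSubgraph p).mp h)
  have huv : u ≠ v := by
    intro h
    subst h
    have := loop_path_length hp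
    omega
  have key : ∀ c : ℕ, (∃ w ∈ p.support, w ≠ u ∧ w ≠ v ∧ τ w = c) → c ∉ τ '' H.verts →
      2 ≤ {w : V | w ∈ p.support ∧ w ≠ u ∧ w ≠ v ∧ τ w = c}.ncard := by
    rintro c ⟨w, hwsupp, hwu, hwv, hwc⟩ hc
    by_contra hlt
    push_neg at hlt
    have hTsub : ∀ x ∈ {w' : V | w' ∈ p.support ∧ w' ≠ u ∧ w' ≠ v ∧ τ w' = c}, x = w := by
      intro x hx
      have hfin : {w' : V | w' ∈ p.support ∧ w' ≠ u ∧ w' ≠ v ∧ τ w' = c}.Finite :=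
        Set.toFinite _
      have h1 : {w' : V | w' ∈ p.support ∧ w' ≠ u ∧ w' ≠ v ∧ τ w' = c}.ncard ≤ 1 := by omega
      exact (Set.ncard_le_one hfin).mp h1 x hx w ⟨hwsupp, hwu, hwv, hwc⟩
    have hwH : w ∉ H.verts := by
      rcases hint w hwsupp with h | h | h
      exacts [absurd h hwu, absurd h hwv, h]
    -- decompose p at w
    set p1 := p.takeUntil w hwsupp with hp1def
    set p2 := p.dropUntil w hwsupp with hp2def
    have hspec : p1.append p2 = p := p.take_spec hwsupp
    have hp1path : p1.IsPath := hp.takeUntil hwsupp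
    have hp2path : p2.IsPath := hp.dropUntil hwsupp
    have hdisj : List.Disjoint p1.support p2.support.tail := by
      have hnd : (p1.support ++ p2.support.tail).Nodup := by
        rw [← Walk.support_append, hspec]; exact hp.support_nodup
      exact List.disjoint_of_nodup_append hnd
    have hp1n : ¬ p1.Nil := by
      intro hn
      have hws : w ∈ p1.support := p1.end_mem_support
      rw [Walk.nil_iff_support_eq.mp hn] at hws
      simp at hws
      exact hwu hws
    have hp2n : ¬ p2.Nil := by
      intro hn
      have hvs : v ∈ p2.support := p2.end_mem_support
      rw [Walk.nil_iff_support_eq.mp hn] at hvs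
      simp at hvs
      exact hwv hvs.symm
    set r1 := p1.reverse with hr1def
    have hr1path : r1.IsPath := hp1path.reverse
    have hr1n : ¬ r1.Nil := by
      rw [Walk.nil_iff_length_eq, Walk.length_reverse]
      rw [Walk.nil_iff_length_eq] at hp1n
      exact hp1n
    obtain ⟨a, hadef⟩ : ∃ a, r1.getVert 1 = a := ⟨_, rfl⟩
    have hwa : G.Adj w a := hadef ▸ r1.adj_snd hr1n
    set r1t : G.Walk a u := r1.tail.copy hadef rfl with hr1tdef
    have hws1 : w :: r1t.support = r1.support := by
      rw [hr1tdef, Walk.support_copy]; exact r1.cons_support_tail hr1n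
    have hwnr1t : w ∉ r1t.support := by
      have hnd := hr1path.support_nodup
      rw [← hws1] at hnd
      exact (List.nodup_cons.mp hnd).1
    have ha_r1t : a ∈ r1t.support := r1t.start_mem_support
    have haw : a ≠ w := fun h => hwnr1t (h ▸ ha_r1t)
    have ha_p1 : a ∈ p1.support := by
      have : a ∈ r1.support := by rw [← hws1]; exact List.mem_cons_of_mem _ ha_r1t
      rwa [hr1def, Walk.support_reverse, List.mem_reverse] at this
    obtain ⟨b, hbdef⟩ : ∃ b, p2.getVert 1 = b := ⟨_, rfl⟩
    have hwb : G.Adj w b := hbdef ▸ p2.adj_snd hp2n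
    set p2t : G.Walk b v := p2.tail.copy hbdef rfl with hp2tdef
    have hws2 : w :: p2t.support = p2.support := by
      rw [hp2tdef, Walk.support_copy]; exact p2.cons_support_tail hp2n
    have htl2 : p2.support.tail = p2t.support := by rw [← hws2, List.tail_cons]
    have hwnp2t : w ∉ p2t.support := by
      have hnd := hp2path.support_nodup
      rw [← hws2] at hnd
      exact (List.nodup_cons.mp hnd).1
    have hb_tail : b ∈ p2.support.tail := by rw [htl2]; exact p2t.start_mem_support
    have hbw : b ≠ w := fun h => hwnp2t (h ▸ (htl2 ▸ hb_tail))
    have hab : a ≠ b := fun h => hdisj ha_p1 (h ▸ hb_tail)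
    have ha_p : a ∈ p.support := by
      rw [← hspec]; exact Walk.subset_support_append_left _ _ ha_p1
    have hb_p : b ∈ p.support := by
      rw [← hspec]
      exact Walk.subset_support_append_right _ _ (List.mem_of_mem_tail hb_tail)
    have hav : a ≠ v := by
      intro h
      have hv2 : v ∈ p2.support := p2.end_mem_support
      rw [← hws2, List.mem_cons] at hv2
      rcases hv2 with h' | h'
      · exact hwv h'.symm
      · exact hdisj (h ▸ ha_p1) (htl2 ▸ h')
    have hbu : b ≠ u := fun h => hdisj (h ▸ p1.start_mem_support) hb_tail
    have hnadj : ¬ G.Adj a b := by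
      intro hadj
      have hsup : (H ⊔ p.toSubgraph).Adj a b := by rw [htop]; exact Subgraph.top_adj.mpr hadj
      rcases Subgraph.sup_adj.mp hsup with h | h
      · have haH : a ∈ H.verts := h.fst_mem
        have hbH : b ∈ H.verts := h.snd_mem
        have hau : a = u := by
          rcases hint a ha_p with h' | h' | h'
          exacts [h', absurd h' hav, absurd haH h']
        have hbv : b = v := by
          rcases hint b hb_p with h' | h' | h'
          exacts [absurd h' hbu, h', absurd hbH h']
        have huvadj : G.Adj u v := by rw [← hau, ← hbv]; exact hadj
        have hq1 : q.length ≤ 1 := by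
          have := hqmin (Walk.cons huvadj Walk.nil) (by
            intro x hx
            simp only [Walk.support_cons, Walk.support_nil, List.mem_cons,
              List.mem_singleton] at hx
            rcases hx with rfl | hx
            · exact hu
            · simp at hx; subst hx; exact hv)
          simpa using this
        have hp2len : p2.length = 1 := getVert_one_end hp2path (hbdef.trans hbv) hp2n
        have hr1len : r1.length = 1 := getVert_one_end hr1path (hadef.trans hau) hr1n
        have hp1len : p1.length = 1 := by rw [← Walk.length_reverse p1]; exact hr1len
        have hplen : p.length = 2 := by
          rw [← hspec, Walk.length_append, hp1len, hp2len]
        omega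
      · have he : s(a, b) ∈ p.edges := (Walk.mem_edges_toSubgraph p).mp
          (Subgraph.mem_edgeSet.mpr h)
        rw [← hspec, Walk.edges_append, List.mem_append] at he
        rcases he with h' | h'
        · exact hdisj (p1.snd_mem_support_of_mem_edges h') hb_tail
        · have ha2 : a ∈ p2.support := p2.fst_mem_support_of_mem_edges h'
          rw [← hws2, List.mem_cons] at ha2
          rcases ha2 with h'' | h''
          · exact haw h''
          · exact hdisj ha_p1 (htl2 ▸ h'')
    obtain ⟨S, ⟨haS, hbS, hcut⟩, hmono⟩ := hτ a b hab hnadj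
    have hwS : w ∈ S := by
      obtain ⟨x, hxW, hxS⟩ := hcut (Walk.cons hwa.symm (Walk.cons hwb Walk.nil))
      simp only [Walk.support_cons, Walk.support_nil, List.mem_cons,
        List.mem_singleton] at hxW
      rcases hxW with rfl | rfl | hx
      · exact absurd hxS haS
      · exact hxS
      · simp at hx; subst hx; exact absurd hxS hbS
    have hSw : ∀ s ∈ S, s = w := by
      intro s hs
      have hsc : τ s = c := by rw [hmono s hs w hwS]; exact hwc
      rcases hcover s with h | h
      · exact absurd ⟨s, h, hsc⟩ hc
      · rcases hint s h with h' | h' | h'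
        · exact absurd ⟨s, h' ▸ hu, hsc⟩ hc
        · exact absurd ⟨s, h' ▸ hv, hsc⟩ hc
        · exact hTsub s ⟨h, fun e => h' (e ▸ hu), fun e => h' (e ▸ hv), hsc⟩
    have hwq : w ∉ q.support := fun h => hwH (hqH w h)
    obtain ⟨x, hxW, hxS⟩ := hcut (r1t.append (q.append p2t.reverse))
    have hxw : x = w := hSw x hxS
    subst hxw
    rw [Walk.mem_support_append_iff] at hxW
    rcases hxW with h | h
    · exact hwnr1t h
    · rw [Walk.mem_support_append_iff] at h
      rcases h with h | h
      · exact hwq h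
      · rw [Walk.support_reverse, List.mem_reverse] at h
        exact hwnp2t h
  refine ⟨key, ?_⟩
  set Is : Finset V := p.support.toFinset.filter (fun x => x ≠ u ∧ x ≠ v) with hIsdef
  set D : Finset ℕ := (Is.image τ).filter (fun c => c ∉ τ '' H.verts) with hDdef
  have step1 : ∀ c ∈ D, 2 ≤ (Is.filter (fun x => τ x = c)).card := by
    intro c hcD
    rw [hDdef, Finset.mem_filter] at hcD
    obtain ⟨hcI, hcH⟩ := hcD
    rw [Finset.mem_image] at hcI
    obtain ⟨x, hxI, hxc⟩ := hcI
    rw [hIsdef, Finset.mem_filter, List.mem_toFinset] at hxI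
    have h2 := key c ⟨x, hxI.1, hxI.2.1, hxI.2.2, hxc⟩ hcH
    have hset : {w : V | w ∈ p.support ∧ w ≠ u ∧ w ≠ v ∧ τ w = c} =
        ↑(Is.filter (fun x => τ x = c)) := by
      ext y
      simp only [hIsdef, Finset.coe_filter, Finset.mem_filter, List.mem_toFinset,
        Set.mem_setOf_eq]
      tauto
    rwa [hset, Set.ncard_coe_finset] at h2
  have step2 : 2 * D.card ≤ Is.card := by
    have hsub : D.biUnion (fun c => Is.filter (fun x => τ x = c)) ⊆ Is :=
      Finset.biUnion_subset.mpr fun c _ => Finset.filter_subset _ _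
    have hpw : ∀ c ∈ D, ∀ c' ∈ D, c ≠ c' →
        Disjoint (Is.filter (fun x => τ x = c)) (Is.filter (fun x => τ x = c')) := by
      intro c _ c' _ hne
      rw [Finset.disjoint_left]
      intro x hx1 hx2
      rw [Finset.mem_filter] at hx1 hx2
      exact hne (hx1.2.symm.trans hx2.2)
    calc 2 * D.card = ∑ _c ∈ D, 2 := by rw [Finset.sum_const, smul_eq_mul, mul_comm]
      _ ≤ ∑ c ∈ D, (Is.filter (fun x => τ x = c)).card := Finset.sum_le_sum step1
      _ = (D.biUnion (fun c => Is.filter (fun x => τ x = c))).card :=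
          (Finset.card_biUnion hpw).symm
      _ ≤ Is.card := Finset.card_le_card hsub
  have step3 : Is.card ≤ p.length - 1 := by
    have hsub : Is ⊆ (p.support.toFinset.erase u).erase v := by
      intro x hx
      rw [hIsdef, Finset.mem_filter] at hx
      exact Finset.mem_erase.mpr ⟨hx.2.2, Finset.mem_erase.mpr ⟨hx.2.1, hx.1⟩⟩
    have hu_mem : u ∈ p.support.toFinset := List.mem_toFinset.mpr p.start_mem_support
    have hv_mem : v ∈ p.support.toFinset.erase u :=
      Finset.mem_erase.mpr ⟨huv.symm, List.mem_toFinset.mpr p.end_mem_support⟩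
    have hcard : p.support.toFinset.card = p.length + 1 := by
      rw [List.toFinset_card_of_nodup hp.support_nodup, Walk.length_support]
    have h1 := Finset.card_erase_of_mem hu_mem
    have h2 := Finset.card_erase_of_mem hv_mem
    have h3 := Finset.card_le_card hsub
    omega
  have hdiff : Set.range τ \ (τ '' H.verts) ⊆ ↑D := by
    rintro c ⟨⟨x, rfl⟩, hcH⟩
    rcases hcover x with h | h
    · exact absurd ⟨x, h, rfl⟩ hcH
    · rcases hint x h with h' | h' | h'
      · exact absurd ⟨x, h' ▸ hu, rfl⟩ hcH
      · exact absurd ⟨x, h' ▸ hv, rfl⟩ hcH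
      · have hxu : x ≠ u := fun e => h' (e ▸ hu)
        have hxv : x ≠ v := fun e => h' (e ▸ hv)
        rw [hDdef]
        refine Finset.mem_coe.mpr (Finset.mem_filter.mpr ⟨?_, hcH⟩)
        exact Finset.mem_image.mpr ⟨x, Finset.mem_filter.mpr
          ⟨List.mem_toFinset.mpr h, hxu, hxv⟩, rfl⟩
  have h5 : (Set.range τ \ (τ '' H.verts)).ncard ≤ D.card := by
    have := Set.ncard_le_ncard hdiff D.finite_toSet
    rwa [Set.ncard_coe_finset] at this
  have h6 : (Set.range τ).ncard ≤
      (Set.range τ \ (τ '' H.verts)).ncard + (τ '' H.verts).ncard := by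
    have hsub : Set.range τ ⊆ (Set.range τ \ (τ '' H.verts)) ∪ (τ '' H.verts) := by
      intro c hc
      by_cases h : c ∈ τ '' H.verts
      · exact Or.inr h
      · exact Or.inl ⟨hc, h⟩
    calc (Set.range τ).ncard
        ≤ ((Set.range τ \ (τ '' H.verts)) ∪ (τ '' H.verts)).ncard :=
          Set.ncard_le_ncard hsub (Set.toFinite _)
      _ ≤ (Set.range τ \ (τ '' H.verts)).ncard + (τ '' H.verts).ncard :=
          Set.ncard_union_le _ _
  have hD2 : D.card ≤ (p.length + 1 - 2) / 2 := by
    rw [Nat.le_div_iff_mul_le (by norm_num : 0 < 2)]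
    omega
  omega
end

section
/- For the graph P(1,1,1) (the complete bipartite graph K_{2,3}), mvd(P(1,1,1)) = 2. -/
open SimpleGraph

variable {V : Type*}

namespace Stmt17Aux

open Sum

abbrev G23 : SimpleGraph (Fin 2 ⊕ Fin 3) := completeBipartiteGraph (Fin 2) (Fin 3)

lemma adj_lr (a : Fin 2) (b : Fin 3) : G23.Adj (inl a) (inr b) := by simp
lemma adj_rl (b : Fin 3) (a : Fin 2) : G23.Adj (inr b) (inl a) := by simp

lemma walk_second {x y : Fin 2 ⊕ Fin 3} (hxy : x ≠ y) (p : G23.Walk x y) :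
    G23.Adj x (p.getVert 1) ∧ p.getVert 1 ∈ p.support := by
  have hl : 0 < p.length := by
    rcases Nat.eq_zero_or_pos p.length with h | h
    · exact absurd (SimpleGraph.Walk.eq_of_length_eq_zero h) hxy
    · exact h
  refine ⟨?_, ?_⟩
  · have := p.adj_getVert_succ hl
    simpa [p.getVert_zero] using this
  · rw [SimpleGraph.Walk.mem_support_iff_exists_getVert]
    exact ⟨1, rfl, hl⟩

lemma walk_ll_hits {a b : Fin 2} (hab : (inl a : Fin 2 ⊕ Fin 3) ≠ inl b)
    (p : G23.Walk (inl a) (inl b)) :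
    ∃ v ∈ p.support, v ∈ Set.range (inr : Fin 3 → Fin 2 ⊕ Fin 3) := by
  obtain ⟨hadj, hmem⟩ := walk_second hab p
  refine ⟨p.getVert 1, hmem, ?_⟩
  rcases h : p.getVert 1 with a' | b'
  · rw [h] at hadj; simp at hadj
  · exact ⟨b', rfl⟩

lemma walk_rr_hits {a b : Fin 3} (hab : (inr a : Fin 2 ⊕ Fin 3) ≠ inr b)
    (p : G23.Walk (inr a) (inr b)) :
    ∃ v ∈ p.support, v ∈ Set.range (inl : Fin 2 → Fin 2 ⊕ Fin 3) := by
  obtain ⟨hadj, hmem⟩ := walk_second hab p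
  refine ⟨p.getVert 1, hmem, ?_⟩
  rcases h : p.getVert 1 with a' | b'
  · exact ⟨a', rfl⟩
  · rw [h] at hadj; simp at hadj

noncomputable def τ0 : Fin 2 ⊕ Fin 3 → ℕ := Sum.elim (fun _ => 0) (fun _ => 1)

lemma τ0_mvd : IsMVDColoring G23 τ0 := by
  intro x y hxy hadj
  cases x with
  | inl a =>
    cases y with
    | inl b =>
      refine ⟨Set.range inr, ⟨by simp, by simp, fun p => walk_ll_hits hxy p⟩, ?_⟩
      rintro _ ⟨u, rfl⟩ _ ⟨v, rfl⟩; rfl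
    | inr b => exact absurd (adj_lr a b) hadj
  | inr b =>
    cases y with
    | inl a => exact absurd (adj_rl b a) hadj
    | inr b' =>
      refine ⟨Set.range inl, ⟨by simp, by simp, fun p => walk_rr_hits hxy p⟩, ?_⟩
      rintro _ ⟨u, rfl⟩ _ ⟨v, rfl⟩; rfl

lemma range_τ0 : Set.range τ0 = {0, 1} := by
  ext n
  constructor
  · rintro ⟨v, rfl⟩; cases v <;> simp [τ0]
  · rintro (rfl | rfl)
    exacts [⟨inl 0, rfl⟩, ⟨inr 0, rfl⟩]

lemma ncard_τ0 : (Set.range τ0).ncard = 2 := by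
  rw [range_τ0]
  rw [Set.ncard_pair (by norm_num)]

lemma colors_le (τ : Fin 2 ⊕ Fin 3 → ℕ) (hτ : IsMVDColoring G23 τ) :
    (Set.range τ).ncard ≤ 2 := by
  obtain ⟨S, ⟨hx, hy, hcut⟩, hmono⟩ :=
    hτ (inl 0) (inl 1) (by simp) (by simp)
  have hR : ∀ b : Fin 3, (inr b : Fin 2 ⊕ Fin 3) ∈ S := by
    intro b
    obtain ⟨v, hv, hvS⟩ :=
      hcut (SimpleGraph.Walk.cons (adj_lr 0 b) (SimpleGraph.Walk.cons (adj_rl b 1) SimpleGraph.Walk.nil))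
    simp [SimpleGraph.Walk.support_cons] at hv
    rcases hv with rfl | rfl | rfl
    · exact absurd hvS hx
    · exact hvS
    · exact absurd hvS hy
  obtain ⟨S', ⟨hx', hy', hcut'⟩, hmono'⟩ :=
    hτ (inr 0) (inr 1) (by simp) (by simp)
  have hL : ∀ a : Fin 2, (inl a : Fin 2 ⊕ Fin 3) ∈ S' := by
    intro a
    obtain ⟨v, hv, hvS⟩ :=
      hcut' (SimpleGraph.Walk.cons (adj_rl 0 a) (SimpleGraph.Walk.cons (adj_lr a 1) SimpleGraph.Walk.nil))
    simp [SimpleGraph.Walk.support_cons] at hv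
    rcases hv with rfl | rfl | rfl
    · exact absurd hvS hx'
    · exact hvS
    · exact absurd hvS hy'
  have hsub : Set.range τ ⊆ {τ (inl 0), τ (inr 0)} := by
    rintro _ ⟨v, rfl⟩
    cases v with
    | inl a => exact Or.inl (hmono' _ (hL a) _ (hL 0))
    | inr b => exact Or.inr (hmono _ (hR b) _ (hR 0))
  calc (Set.range τ).ncard ≤ ({τ (inl 0), τ (inr 0)} : Set ℕ).ncard :=
        Set.ncard_le_ncard hsub (Set.toFinite _)
    _ ≤ 2 := (Set.ncard_insert_le _ _).trans (by simp)

end Stmt17Aux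

/-- `mvd(P(1,1,1)) = mvd(K_{2,3}) = 2`. -/
theorem stmt17 : mvd (completeBipartiteGraph (Fin 2) (Fin 3)) = 2 := by
  unfold mvd
  have hmem : (2 : ℕ) ∈ {k | ∃ τ : Fin 2 ⊕ Fin 3 → ℕ,
      IsMVDColoring (completeBipartiteGraph (Fin 2) (Fin 3)) τ ∧ (Set.range τ).ncard = k} :=
    ⟨Stmt17Aux.τ0, Stmt17Aux.τ0_mvd, Stmt17Aux.ncard_τ0⟩
  have hub : ∀ k ∈ {k | ∃ τ : Fin 2 ⊕ Fin 3 → ℕ,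
      IsMVDColoring (completeBipartiteGraph (Fin 2) (Fin 3)) τ ∧ (Set.range τ).ncard = k},
      k ≤ 2 := by
    rintro k ⟨τ, hτ, rfl⟩
    exact Stmt17Aux.colors_le τ hτ
  exact le_antisymm (csSup_le ⟨2, hmem⟩ hub) (le_csSup ⟨2, hub⟩ hmem)
end
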